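/- arXiv:2405.04330 — 5 statements merged into one kernel-verified Lean document; each statement's English description precedes it below -/
import Mathlib

section
/- Let A ∈ ℝ^{m×n} be partitioned in blocks A = [[A11, A12],[A21, A22]] with A11 ∈ ℝ^{k×k}. If A11 is a local maximum volume k×k submatrix of A, then A11 is invertible and every entry of A11⁻¹·A12 and of A21·A11⁻¹ has absolute value at most 1; that is, ‖A11⁻¹A12‖_max ≤ 1 and ‖A21A11⁻¹‖_max ≤ 1 (the partial LU factorization with pivot A11 satisfies interpolative bounds with ν = 1). -/
open Matrix

/-- The spectral norm (`‖·‖₂`, largest singular value) of a real matrix. -/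
noncomputable def specNorm {m n : Type*} [Fintype m] [Fintype n] [DecidableEq n]
    (A : Matrix m n ℝ) : ℝ :=
  ‖LinearMap.toContinuousLinearMap (Matrix.toEuclideanLin A)‖

/-- `sval A j` is the `j`-th largest singular value of `A` (1-indexed), characterized as the
distance, in the spectral norm, from `A` to the set of matrices of rank `< j`. -/
noncomputable def sval {m n : Type*} [Fintype m] [Fintype n] [DecidableEq n]
    (A : Matrix m n ℝ) (j : ℕ) : ℝ :=
  sInf {x : ℝ | ∃ B : Matrix m n ℝ, B.rank < j ∧ x = specNorm (A - B)}

/-- The volume of a matrix: the product of its singular values. -/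
noncomputable def vol {m n : Type*} [Fintype m] [Fintype n] [DecidableEq n]
    (A : Matrix m n ℝ) : ℝ :=
  ∏ j ∈ Finset.Icc 1 (min (Fintype.card m) (Fintype.card n)), sval A j

/-- `DiffOne b r` : `r` is an injective selection of indices whose image (index set)
differs from the index set selected by `b` in at most one element. -/
def DiffOne {ι α : Type*} [Fintype ι] [DecidableEq α] (b r : ι → α) : Prop :=
  Function.Injective r ∧ (Finset.univ.image r \ Finset.univ.image b).card ≤ 1

section Aux

set_option maxHeartbeats 1000000
set_option synthInstance.maxHeartbeats 100000

lemma inner_combo {k : ℕ} (w : Fin k → EuclideanSpace ℝ (Fin k)) (d : Fin k → ℝ)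
    (h : ∀ a b, (inner ℝ (w a) (w b) : ℝ) = if a = b then d a else 0)
    (c : Fin k → ℝ) (T : Finset (Fin k)) :
    (inner ℝ (∑ l ∈ T, c l • w l) (∑ l ∈ T, c l • w l) : ℝ) = ∑ l ∈ T, d l * c l ^ 2 := by
  rw [sum_inner]
  refine Finset.sum_congr rfl fun l hl => ?_
  rw [real_inner_smul_left, inner_sum]
  have hterm : ∀ l' ∈ T, (inner ℝ (w l) (c l' • w l') : ℝ) = if l' = l then d l * c l else 0 := by
    intro l' _
    rw [real_inner_smul_right, h l l']
    by_cases hll : l = l'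
    · subst hll; simp [mul_comm]
    · simp [hll, Ne.symm hll]
  rw [Finset.sum_congr rfl hterm, Finset.sum_ite_eq' T l, if_pos hl]
  ring

lemma specNorm_nonneg' {k m : ℕ} (M : Matrix (Fin m) (Fin k) ℝ) : 0 ≤ specNorm M :=
  norm_nonneg _

lemma specNorm_le_bound {k : ℕ} (M : Matrix (Fin k) (Fin k) ℝ) {c : ℝ} (hc : 0 ≤ c)
    (h : ∀ x : EuclideanSpace ℝ (Fin k), ‖Matrix.toEuclideanLin M x‖ ≤ c * ‖x‖) :
    specNorm M ≤ c := by
  refine ContinuousLinearMap.opNorm_le_bound _ hc fun x => ?_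
  exact h x

lemma norm_apply_le_specNorm {k : ℕ} (M : Matrix (Fin k) (Fin k) ℝ)
    (x : EuclideanSpace ℝ (Fin k)) :
    ‖Matrix.toEuclideanLin M x‖ ≤ specNorm M * ‖x‖ :=
  (LinearMap.toContinuousLinearMap (Matrix.toEuclideanLin M)).le_opNorm x

lemma sval_eq_sqrt {k : ℕ} (A : Matrix (Fin k) (Fin k) ℝ) (μ : Fin k → ℝ)
    (v : Fin k → EuclideanSpace ℝ (Fin k))
    (hanti : Antitone μ) (hnn : ∀ l, 0 ≤ μ l)
    (hv : ∀ a b, (inner ℝ (v a) (v b) : ℝ) = if a = b then 1 else 0)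
    (hAv : ∀ a b, (inner ℝ (Matrix.toEuclideanLin A (v a)) (Matrix.toEuclideanLin A (v b)) : ℝ)
       = if a = b then μ a else 0)
    (i : Fin k) : sval A ((i : ℕ) + 1) = Real.sqrt (μ i) := by
  classical
  have : Nonempty (Fin k) := ⟨i⟩
  set σ := Real.sqrt (μ i) with hσ
  have hσnn : 0 ≤ σ := Real.sqrt_nonneg _
  have hσsq : σ ^ 2 = μ i := Real.sq_sqrt (hnn i)
  have hon : Orthonormal ℝ v := orthonormal_iff_ite.mpr hv
  have hspan : Submodule.span ℝ (Set.range v) = ⊤ :=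
    hon.linearIndependent.span_eq_top_of_card_eq_finrank
      (by simp [finrank_euclideanSpace])
  have hrepr : ∀ x : EuclideanSpace ℝ (Fin k), ∑ l, (inner ℝ (v l) x : ℝ) • v l = x := by
    intro x
    have hb := (OrthonormalBasis.mk hon (le_of_eq hspan.symm)).sum_repr' x
    rwa [OrthonormalBasis.coe_mk] at hb
  have key : ∀ x : EuclideanSpace ℝ (Fin k), Matrix.toEuclideanLin A x
      = ∑ l, (inner ℝ (v l) x : ℝ) • Matrix.toEuclideanLin A (v l) := by
    intro x
    conv_lhs => rw [← hrepr x]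
    simp only [_root_.map_sum, _root_.map_smul]
  have hsetlb : ∀ y ∈ {x : ℝ | ∃ B : Matrix (Fin k) (Fin k) ℝ,
      B.rank < (i : ℕ) + 1 ∧ x = specNorm (A - B)}, 0 ≤ y := by
    rintro y ⟨B, -, rfl⟩; exact norm_nonneg _
  have hbdd : BddBelow {x : ℝ | ∃ B : Matrix (Fin k) (Fin k) ℝ,
      B.rank < (i : ℕ) + 1 ∧ x = specNorm (A - B)} := ⟨0, hsetlb⟩
  refine le_antisymm ?_ ?_
  · -- upper bound : construct the truncated matrix
    set G : EuclideanSpace ℝ (Fin k) →ₗ[ℝ] EuclideanSpace ℝ (Fin k) :=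
      ∑ l ∈ Finset.Iio i, LinearMap.smulRight
        ((innerSL ℝ (v l)) : EuclideanSpace ℝ (Fin k) →L[ℝ] ℝ).toLinearMap
        (Matrix.toEuclideanLin A (v l)) with hG
    have hGapp : ∀ x, G x = ∑ l ∈ Finset.Iio i,
        (inner ℝ (v l) x : ℝ) • Matrix.toEuclideanLin A (v l) := by
      intro x
      simp [hG, LinearMap.sum_apply, LinearMap.smulRight_apply]
    set Bm : Matrix (Fin k) (Fin k) ℝ := Matrix.toEuclideanLin.symm G with hBm
    have hBmG : Matrix.toEuclideanLin Bm = G := by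
      rw [hBm, LinearEquiv.apply_symm_apply]
    have hrank : Bm.rank < (i : ℕ) + 1 := by
      have h1 : Bm.rank = Module.finrank ℝ (LinearMap.range (Matrix.toEuclideanLin Bm)) := by
        rw [Matrix.rank_eq_finrank_range_toLin Bm (PiLp.basisFun 2 ℝ (Fin k))
          (PiLp.basisFun 2 ℝ (Fin k)), ← Matrix.toEuclideanLin_eq_toLin]
      have h2 : LinearMap.range (Matrix.toEuclideanLin Bm) ≤ Submodule.span ℝ
          (Set.range (fun l : {l // l ∈ Finset.Iio i} => Matrix.toEuclideanLin A (v l))) := by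
        rw [hBmG]
        rintro y ⟨x, rfl⟩
        rw [hGapp]
        refine Submodule.sum_smul_mem _ _ fun l hl => ?_
        exact Submodule.subset_span ⟨⟨l, hl⟩, rfl⟩
      have h3 : Module.finrank ℝ (Submodule.span ℝ
          (Set.range (fun l : {l // l ∈ Finset.Iio i} => Matrix.toEuclideanLin A (v l))))
          ≤ (i : ℕ) := by
        refine le_trans (finrank_span_le_card _) ?_
        rw [Set.toFinset_range]
        refine le_trans (Finset.card_image_le) ?_
        simp [Fin.card_Iio]
      calc Bm.rank ≤ (i : ℕ) := by
            rw [h1]; exact le_trans (Submodule.finrank_mono h2) h3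
        _ < (i : ℕ) + 1 := Nat.lt_succ_self _
    have hbound : ∀ x : EuclideanSpace ℝ (Fin k),
        ‖Matrix.toEuclideanLin (A - Bm) x‖ ≤ σ * ‖x‖ := by
      intro x
      set c : Fin k → ℝ := fun l => (inner ℝ (v l) x : ℝ) with hc
      have hdiff : Matrix.toEuclideanLin (A - Bm) x
          = ∑ l ∈ Finset.univ \ Finset.Iio i, c l • Matrix.toEuclideanLin A (v l) := by
        have hsd := Finset.sum_sdiff (f := fun l => c l • Matrix.toEuclideanLin A (v l))
          (Finset.subset_univ (Finset.Iio i))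
        rw [map_sub, LinearMap.sub_apply, key x, hBmG, hGapp]
        rw [← hsd]
        abel
      have hnorm1 : ‖Matrix.toEuclideanLin (A - Bm) x‖ ^ 2
          = ∑ l ∈ Finset.univ \ Finset.Iio i, μ l * c l ^ 2 := by
        rw [← real_inner_self_eq_norm_sq, hdiff]
        exact inner_combo _ μ hAv c _
      have hnorm2 : ‖x‖ ^ 2 = ∑ l, c l ^ 2 := by
        rw [← real_inner_self_eq_norm_sq]
        conv_lhs => rw [← hrepr x]
        have := inner_combo v (fun _ => 1) hv c Finset.univ
        simpa using this
      have hle : ‖Matrix.toEuclideanLin (A - Bm) x‖ ^ 2 ≤ μ i * ‖x‖ ^ 2 := by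
        rw [hnorm1, hnorm2, Finset.mul_sum]
        calc ∑ l ∈ Finset.univ \ Finset.Iio i, μ l * c l ^ 2
            ≤ ∑ l ∈ Finset.univ \ Finset.Iio i, μ i * c l ^ 2 := by
              refine Finset.sum_le_sum fun l hl => ?_
              have hil : i ≤ l := by
                rcases Finset.mem_sdiff.mp hl with ⟨-, h2⟩
                simpa using h2
              exact mul_le_mul_of_nonneg_right (hanti hil) (sq_nonneg _)
          _ ≤ ∑ l, μ i * c l ^ 2 := by
              refine Finset.sum_le_sum_of_subset_of_nonneg (Finset.sdiff_subset) ?_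
              intro l _ _
              exact mul_nonneg (hnn i) (sq_nonneg _)
      have := Real.sqrt_le_sqrt hle
      rwa [Real.sqrt_sq (norm_nonneg _), Real.sqrt_mul (hnn i), Real.sqrt_sq (norm_nonneg _),
        ← hσ] at this
    have hmem : specNorm (A - Bm) ∈ {x : ℝ | ∃ B : Matrix (Fin k) (Fin k) ℝ,
        B.rank < (i : ℕ) + 1 ∧ x = specNorm (A - B)} := ⟨Bm, hrank, rfl⟩
    exact le_trans (csInf_le hbdd hmem) (specNorm_le_bound _ hσnn hbound)
  · -- lower bound
    have hne : {x : ℝ | ∃ B : Matrix (Fin k) (Fin k) ℝ,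
        B.rank < (i : ℕ) + 1 ∧ x = specNorm (A - B)}.Nonempty :=
      ⟨specNorm (A - 0), 0, by simp [Matrix.rank_zero], rfl⟩
    refine le_csInf hne ?_
    rintro y ⟨B, hB, rfl⟩
    set V : Submodule ℝ (EuclideanSpace ℝ (Fin k)) :=
      Submodule.span ℝ (Set.range (fun l : {l // l ∈ Finset.Iic i} => v ↑l)) with hV
    have hVrank : Module.finrank ℝ V = (i : ℕ) + 1 := by
      have hli : LinearIndependent ℝ (fun l : {l // l ∈ Finset.Iic i} => v ↑l) :=
        hon.linearIndependent.comp _ Subtype.val_injective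
      rw [hV, finrank_span_eq_card hli, Fintype.card_coe, Fin.card_Iic]
    set W : Submodule ℝ (EuclideanSpace ℝ (Fin k)) :=
      LinearMap.ker (Matrix.toEuclideanLin B) with hW
    have hrn : Module.finrank ℝ (LinearMap.range (Matrix.toEuclideanLin B))
        + Module.finrank ℝ W = k := by
      rw [hW, LinearMap.finrank_range_add_finrank_ker]
      simp [finrank_euclideanSpace]
    have hrB : B.rank = Module.finrank ℝ (LinearMap.range (Matrix.toEuclideanLin B)) := by
      rw [Matrix.rank_eq_finrank_range_toLin B (PiLp.basisFun 2 ℝ (Fin k))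
        (PiLp.basisFun 2 ℝ (Fin k)), ← Matrix.toEuclideanLin_eq_toLin]
    have hsum := Submodule.finrank_sup_add_finrank_inf_eq V W
    have hsup : Module.finrank ℝ ↥(V ⊔ W) ≤ k := by
      refine le_trans (Submodule.finrank_le _) ?_
      simp [finrank_euclideanSpace]
    have hdim : 0 < Module.finrank ℝ ↥(V ⊓ W) := by omega
    rw [Module.finrank_pos_iff] at hdim
    obtain ⟨⟨x, hxVW⟩, hx0'⟩ := exists_ne (0 : ↥(V ⊓ W))
    have hx0 : x ≠ 0 := by
      intro h
      exact hx0' (Subtype.ext h)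
    obtain ⟨hxV, hxW⟩ := Submodule.mem_inf.mp hxVW
    rw [hV, Submodule.mem_span_range_iff_exists_fun] at hxV
    obtain ⟨c0, hc0⟩ := hxV
    set c : Fin k → ℝ := fun l => if h : l ∈ Finset.Iic i then c0 ⟨l, h⟩ else 0 with hcdef
    have hx : ∑ l ∈ Finset.Iic i, c l • v l = x := by
      rw [← Finset.sum_coe_sort (Finset.Iic i) (fun l => c l • v l), ← hc0]
      refine Finset.sum_congr rfl fun l _ => ?_
      have hl : (l : Fin k) ∈ Finset.Iic i := l.2
      simp only [hcdef, dif_pos hl, Subtype.coe_eta]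
    have hnx : ‖x‖ ^ 2 = ∑ l ∈ Finset.Iic i, c l ^ 2 := by
      rw [← real_inner_self_eq_norm_sq, ← hx]
      have := inner_combo v (fun _ => 1) hv c (Finset.Iic i)
      simpa using this
    have hAx : Matrix.toEuclideanLin A x
        = ∑ l ∈ Finset.Iic i, c l • Matrix.toEuclideanLin A (v l) := by
      conv_lhs => rw [← hx]
      simp only [_root_.map_sum, _root_.map_smul]
    have hnAx : ‖Matrix.toEuclideanLin A x‖ ^ 2 = ∑ l ∈ Finset.Iic i, μ l * c l ^ 2 := by
      rw [← real_inner_self_eq_norm_sq, hAx]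
      exact inner_combo _ μ hAv c _
    have hgesq : μ i * ‖x‖ ^ 2 ≤ ‖Matrix.toEuclideanLin A x‖ ^ 2 := by
      rw [hnx, hnAx, Finset.mul_sum]
      refine Finset.sum_le_sum fun l hl => ?_
      have : l ≤ i := Finset.mem_Iic.mp hl
      exact mul_le_mul_of_nonneg_right (hanti this) (sq_nonneg _)
    have hge : σ * ‖x‖ ≤ ‖Matrix.toEuclideanLin A x‖ := by
      have := Real.sqrt_le_sqrt hgesq
      rwa [Real.sqrt_mul (hnn i), Real.sqrt_sq (norm_nonneg _),
        Real.sqrt_sq (norm_nonneg _), ← hσ] at this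
    have hker : Matrix.toEuclideanLin B x = 0 := hxW
    have hABx : Matrix.toEuclideanLin (A - B) x = Matrix.toEuclideanLin A x := by
      rw [map_sub, LinearMap.sub_apply, hker, sub_zero]
    have hop : ‖Matrix.toEuclideanLin A x‖ ≤ specNorm (A - B) * ‖x‖ := by
      rw [← hABx]
      exact norm_apply_le_specNorm _ _
    have hxpos : 0 < ‖x‖ := by
      rw [norm_pos_iff]
      exact hx0
    exact le_of_mul_le_mul_right (le_trans hge hop) hxpos

lemma prod_sqrt {α : Type*} (s : Finset α) (f : α → ℝ) (h : ∀ a ∈ s, 0 ≤ f a) :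
    ∏ a ∈ s, Real.sqrt (f a) = Real.sqrt (∏ a ∈ s, f a) := by
  induction s using Finset.cons_induction with
  | empty => simp
  | cons a s ha ih =>
    rw [Finset.prod_cons, Finset.prod_cons, ih (fun b hb => h b (Finset.mem_cons_of_mem hb)),
      ← Real.sqrt_mul (h a (Finset.mem_cons_self a s))]

lemma vol_eq_abs_det {k : ℕ} (A : Matrix (Fin k) (Fin k) ℝ) : vol A = |A.det| := by
  classical
  have hH : (Aᴴ * A).IsHermitian := Matrix.isHermitian_conjTranspose_mul_self A
  have hnn₀ : ∀ l, 0 ≤ hH.eigenvalues l := Matrix.eigenvalues_conjTranspose_mul_self_nonneg A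
  have hv₀o : ∀ a b, (inner ℝ (hH.eigenvectorBasis a) (hH.eigenvectorBasis b) : ℝ)
      = if a = b then 1 else 0 :=
    orthonormal_iff_ite.mp hH.eigenvectorBasis.orthonormal
  have hdot : ∀ a b, dotProduct (⇑(hH.eigenvectorBasis a)) (⇑(hH.eigenvectorBasis b))
      = if a = b then (1 : ℝ) else 0 := by
    intro a b
    have := hv₀o a b
    simpa [PiLp.inner_apply, RCLike.inner_apply, dotProduct, mul_comm] using this
  have hAv₀ : ∀ a b, (inner ℝ (Matrix.toEuclideanLin A (hH.eigenvectorBasis a))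
      (Matrix.toEuclideanLin A (hH.eigenvectorBasis b)) : ℝ)
      = if a = b then hH.eigenvalues a else 0 := by
    intro a b
    have h1 : (inner ℝ (Matrix.toEuclideanLin A (hH.eigenvectorBasis a))
        (Matrix.toEuclideanLin A (hH.eigenvectorBasis b)) : ℝ)
        = dotProduct (A *ᵥ ⇑(hH.eigenvectorBasis a)) (A *ᵥ ⇑(hH.eigenvectorBasis b)) := by
      simp only [PiLp.inner_apply, RCLike.inner_apply, conj_trivial,
        Matrix.toEuclideanLin_apply, dotProduct]
      exact Finset.sum_congr rfl fun _ _ => mul_comm _ _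
    have htr : Aᵀ * A = Aᴴ * A := by
      rw [Matrix.conjTranspose_eq_transpose_of_trivial]
    rw [h1, dotProduct_mulVec, ← Matrix.mulVec_transpose, Matrix.mulVec_mulVec, htr,
      hH.mulVec_eigenvectorBasis, smul_dotProduct, hdot a b]
    simp [mul_ite]
  set π := Tuple.sort hH.eigenvalues with hπ
  set μ : Fin k → ℝ := fun l => hH.eigenvalues (π l.rev) with hμ
  set v : Fin k → EuclideanSpace ℝ (Fin k) := fun l => hH.eigenvectorBasis (π l.rev) with hv
  have hanti : Antitone μ := by
    intro a b hab
    exact Tuple.monotone_sort hH.eigenvalues (Fin.rev_le_rev.mpr hab)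
  have hinj : ∀ a b : Fin k, (π a.rev = π b.rev) ↔ a = b := by
    intro a b
    rw [Equiv.apply_eq_iff_eq, Fin.rev_inj]
  have hvo : ∀ a b, (inner ℝ (v a) (v b) : ℝ) = if a = b then 1 else 0 := by
    intro a b
    rw [show v a = hH.eigenvectorBasis (π a.rev) from rfl,
      show v b = hH.eigenvectorBasis (π b.rev) from rfl,
      hv₀o, if_congr (hinj a b) rfl rfl]
  have hAv : ∀ a b, (inner ℝ (Matrix.toEuclideanLin A (v a))
      (Matrix.toEuclideanLin A (v b)) : ℝ) = if a = b then μ a else 0 := by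
    intro a b
    rw [show v a = hH.eigenvectorBasis (π a.rev) from rfl,
      show v b = hH.eigenvectorBasis (π b.rev) from rfl,
      hAv₀, if_congr (hinj a b) rfl rfl]
  have hsval : ∀ i : Fin k, sval A ((i : ℕ) + 1) = Real.sqrt (μ i) :=
    fun i => sval_eq_sqrt A μ v hanti (fun l => hnn₀ _) hvo hAv i
  have hvol : vol A = ∏ i : Fin k, sval A ((i : ℕ) + 1) := by
    rw [vol, Fintype.card_fin, min_self]
    have himg : Finset.Icc 1 k = Finset.image (fun a : Fin k => (a : ℕ) + 1) Finset.univ := by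
      ext j
      simp only [Finset.mem_Icc, Finset.mem_image, Finset.mem_univ, true_and]
      constructor
      · rintro ⟨h1, h2⟩
        exact ⟨⟨j - 1, by omega⟩, by simp; omega⟩
      · rintro ⟨a, rfl⟩
        exact ⟨Nat.succ_le_succ (Nat.zero_le _), Nat.succ_le_of_lt a.isLt⟩
    rw [himg, Finset.prod_image (fun a _ b _ hab => by apply Fin.ext; omega)]
  have hprodμ : ∏ i, μ i = ∏ i, hH.eigenvalues i := by
    have := Equiv.prod_comp (Fin.revPerm.trans π) hH.eigenvalues
    simpa [hμ] using this
  have hprodμ₀ : ∏ i, hH.eigenvalues i = A.det ^ 2 := by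
    have hd := hH.det_eq_prod_eigenvalues
    rw [Matrix.det_mul, Matrix.det_conjTranspose, star_trivial,
      RCLike.ofReal_real_eq_id] at hd
    simp only [id_eq] at hd
    rw [← hd, sq]
  calc vol A = ∏ i : Fin k, Real.sqrt (μ i) := by
        rw [hvol]; exact Finset.prod_congr rfl fun i _ => hsval i
    _ = Real.sqrt (∏ i, μ i) := prod_sqrt _ _ fun i _ => hnn₀ _
    _ = Real.sqrt (A.det ^ 2) := by rw [hprodμ, hprodμ₀]
    _ = |A.det| := Real.sqrt_sq_eq_abs _

end Aux

theorem statement_0 {k m' n' : ℕ}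
    (A11 : Matrix (Fin k) (Fin k) ℝ) (A12 : Matrix (Fin k) (Fin n') ℝ)
    (A21 : Matrix (Fin m') (Fin k) ℝ) (A22 : Matrix (Fin m') (Fin n') ℝ)
    (hpos : 0 < vol A11)
    (hmax : ∀ (r : Fin k → Fin k ⊕ Fin m') (c : Fin k → Fin k ⊕ Fin n'),
      DiffOne Sum.inl r → DiffOne Sum.inl c →
      vol ((Matrix.fromBlocks A11 A12 A21 A22).submatrix r c) ≤ vol A11) :
    IsUnit A11.det ∧
      (∀ i j, |(A11⁻¹ * A12) i j| ≤ 1) ∧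
      (∀ i j, |(A21 * A11⁻¹) i j| ≤ 1) := by
  classical
  have hva : vol A11 = |A11.det| := vol_eq_abs_det A11
  have hdet : A11.det ≠ 0 := by
    intro h
    rw [hva, h, abs_zero] at hpos
    exact lt_irrefl 0 hpos
  have hadj : A11.det • A11⁻¹ = A11.adjugate := by
    rw [Matrix.inv_def, smul_smul, Ring.inverse_eq_inv', mul_inv_cancel₀ hdet, one_smul]
  have h0 : 0 < |A11.det| := abs_pos.mpr hdet
  have hd1r : DiffOne (Sum.inl : Fin k → Fin k ⊕ Fin m') Sum.inl :=
    ⟨Sum.inl_injective, by simp⟩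
  have hd1c : DiffOne (Sum.inl : Fin k → Fin k ⊕ Fin n') Sum.inl :=
    ⟨Sum.inl_injective, by simp⟩
  refine ⟨isUnit_iff_ne_zero.mpr hdet, ?_, ?_⟩
  · intro i j
    set c : Fin k → Fin k ⊕ Fin n' := fun t => if t = i then Sum.inr j else Sum.inl t with hc
    have hd2 : DiffOne Sum.inl c := by
      constructor
      · intro a b hab
        simp only [hc] at hab
        split_ifs at hab with ha hb hb <;> simp_all
      · refine le_trans (Finset.card_le_card ?_) (le_of_eq (Finset.card_singleton (Sum.inr j)))
        intro x hx
        rw [Finset.mem_sdiff] at hx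
        obtain ⟨hx1, hx2⟩ := hx
        rw [Finset.mem_image] at hx1
        obtain ⟨t, -, rfl⟩ := hx1
        by_cases ht : t = i
        · simp [hc, ht]
        · exact absurd (Finset.mem_image.mpr ⟨t, Finset.mem_univ t, by simp [hc, ht]⟩) hx2
    have hle := hmax Sum.inl c hd1r hd2
    have hsub : (Matrix.fromBlocks A11 A12 A21 A22).submatrix Sum.inl c
        = A11.updateCol i (fun p => A12 p j) := by
      ext p t
      by_cases ht : t = i <;>
        simp [hc, ht, Matrix.submatrix_apply, Matrix.updateCol_apply]
    have hdetM : (A11.updateCol i fun p => A12 p j).det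
        = A11.det * (A11⁻¹ * A12) i j := by
      rw [← Matrix.cramer_apply, Matrix.cramer_eq_adjugate_mulVec, ← hadj]
      rw [Matrix.smul_mulVec]
      simp [Matrix.mulVec, Matrix.mul_apply, dotProduct]
    rw [hsub, vol_eq_abs_det, hva, hdetM, abs_mul] at hle
    exact (mul_le_iff_le_one_right h0).mp hle
  · intro i j
    set r : Fin k → Fin k ⊕ Fin m' := fun t => if t = j then Sum.inr i else Sum.inl t with hr
    have hd2 : DiffOne Sum.inl r := by
      constructor
      · intro a b hab
        simp only [hr] at hab
        split_ifs at hab with ha hb hb <;> simp_all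
      · refine le_trans (Finset.card_le_card ?_) (le_of_eq (Finset.card_singleton (Sum.inr i)))
        intro x hx
        rw [Finset.mem_sdiff] at hx
        obtain ⟨hx1, hx2⟩ := hx
        rw [Finset.mem_image] at hx1
        obtain ⟨t, -, rfl⟩ := hx1
        by_cases ht : t = j
        · simp [hr, ht]
        · exact absurd (Finset.mem_image.mpr ⟨t, Finset.mem_univ t, by simp [hr, ht]⟩) hx2
    have hle := hmax r Sum.inl hd2 hd1c
    have hsub : (Matrix.fromBlocks A11 A12 A21 A22).submatrix r Sum.inl
        = A11.updateRow j (fun q => A21 i q) := by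
      ext p t
      by_cases hp : p = j <;>
        simp [hr, hp, Matrix.submatrix_apply, Matrix.updateRow_apply]
    have hadjT : A11ᵀ.det • A11ᵀ⁻¹ = A11ᵀ.adjugate := by
      rw [Matrix.inv_def, smul_smul, Ring.inverse_eq_inv', mul_inv_cancel₀ (by
        rw [Matrix.det_transpose]; exact hdet), one_smul]
    have hdetM : (A11.updateRow j fun q => A21 i q).det
        = A11.det * (A21 * A11⁻¹) i j := by
      rw [← Matrix.det_transpose, ← Matrix.updateCol_transpose]
      rw [← Matrix.cramer_apply, Matrix.cramer_eq_adjugate_mulVec, ← hadjT]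
      rw [Matrix.smul_mulVec, Matrix.det_transpose, ← Matrix.transpose_nonsing_inv]
      have : ∀ q, A11⁻¹ᵀ j q = A11⁻¹ q j := fun q => rfl
      simp only [Pi.smul_apply, smul_eq_mul]
      congr 1
      simp [Matrix.mulVec, Matrix.mul_apply, dotProduct, Matrix.transpose_apply,
        mul_comm]
    rw [hsub, vol_eq_abs_det, hva, hdetM, abs_mul] at hle
    exact (mul_le_iff_le_one_right h0).mp hle
end

section
/- Let A ∈ ℝ^{m×n} be partitioned in blocks A = [[A11, A12],[A21, A22]] with A11 ∈ ℝ^{k×k} invertible, and let A_k = [[A11, A12],[A21, A21·A11⁻¹·A12]] be the rank-k approximant of the partial LU factorization. Then for every 1 ≤ j ≤ k: σ_j(A_k) ≤ (1 + ‖A21·A11⁻¹‖₂)·(1 + ‖A11⁻¹·A12‖₂)·σ_j(A11). -/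
open Matrix

section Aux

open scoped Matrix.Norms.L2Operator

lemma specNorm_eq_l2 {m n : Type*} [Fintype m] [Fintype n] [DecidableEq n]
    (A : Matrix m n ℝ) : specNorm A = ‖A‖ := rfl

lemma euclid_norm_sq {ι : Type*} [Fintype ι] (v : ι → ℝ) :
    ‖(WithLp.equiv 2 (ι → ℝ)).symm v‖ ^ 2 = ∑ i, v i ^ 2 := by
  rw [EuclideanSpace.norm_eq, Real.sq_sqrt (by positivity)]
  simp

lemma norm_fromRows_le {m₁ m₂ n : Type*} [Fintype m₁] [Fintype m₂] [Fintype n] [DecidableEq n]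
    (A : Matrix m₁ n ℝ) (B : Matrix m₂ n ℝ) :
    ‖fromRows A B‖ ≤ ‖A‖ + ‖B‖ := by
  rw [l2_opNorm_def]
  apply ContinuousLinearMap.opNorm_le_bound _ (by positivity)
  intro x
  simp only [LinearEquiv.trans_apply, LinearMap.coe_toContinuousLinearMap']
  rw [Matrix.toEuclideanLin_apply]
  have hsq : ‖(WithLp.equiv 2 ((m₁ ⊕ m₂) → ℝ)).symm (fromRows A B *ᵥ (WithLp.equiv 2 (n → ℝ)) x)‖ ^ 2
      = ‖(WithLp.equiv 2 (m₁ → ℝ)).symm (A *ᵥ (WithLp.equiv 2 (n → ℝ)) x)‖ ^ 2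
        + ‖(WithLp.equiv 2 (m₂ → ℝ)).symm (B *ᵥ (WithLp.equiv 2 (n → ℝ)) x)‖ ^ 2 := by
    rw [euclid_norm_sq, euclid_norm_sq, euclid_norm_sq, Fintype.sum_sum_type]
    simp [fromRows_mulVec]
  have h1 : ‖(WithLp.equiv 2 (m₁ → ℝ)).symm (A *ᵥ (WithLp.equiv 2 (n → ℝ)) x)‖ ≤ ‖A‖ * ‖x‖ :=
    A.l2_opNorm_mulVec x
  have h2 : ‖(WithLp.equiv 2 (m₂ → ℝ)).symm (B *ᵥ (WithLp.equiv 2 (n → ℝ)) x)‖ ≤ ‖B‖ * ‖x‖ :=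
    B.l2_opNorm_mulVec x
  have hn0 : (0:ℝ) ≤ ‖(WithLp.equiv 2 ((m₁ ⊕ m₂) → ℝ)).symm
      (fromRows A B *ᵥ (WithLp.equiv 2 (n → ℝ)) x)‖ := norm_nonneg _
  change ‖(WithLp.equiv 2 ((m₁ ⊕ m₂) → ℝ)).symm (fromRows A B *ᵥ (WithLp.equiv 2 (n → ℝ)) x)‖ ≤ _
  nlinarith [norm_nonneg ((WithLp.equiv 2 (m₁ → ℝ)).symm (A *ᵥ (WithLp.equiv 2 (n → ℝ)) x)),
    norm_nonneg ((WithLp.equiv 2 (m₂ → ℝ)).symm (B *ᵥ (WithLp.equiv 2 (n → ℝ)) x)),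
    norm_nonneg x, norm_nonneg A, norm_nonneg B]

lemma norm_fromCols_le {n n₁ n₂ : Type*} [Fintype n] [Fintype n₁] [Fintype n₂]
    [DecidableEq n₁] [DecidableEq n₂]
    (A : Matrix n n₁ ℝ) (B : Matrix n n₂ ℝ) :
    ‖fromCols A B‖ ≤ ‖A‖ + ‖B‖ := by
  rw [l2_opNorm_def]
  apply ContinuousLinearMap.opNorm_le_bound _ (by positivity)
  intro x
  simp only [LinearEquiv.trans_apply, LinearMap.coe_toContinuousLinearMap']
  rw [Matrix.toEuclideanLin_apply]
  change ‖(WithLp.equiv 2 (n → ℝ)).symm (fromCols A B *ᵥ (WithLp.equiv 2 ((n₁ ⊕ n₂) → ℝ)) x)‖ ≤ _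
  set v : (n₁ ⊕ n₂) → ℝ := (WithLp.equiv 2 ((n₁ ⊕ n₂) → ℝ)) x with hv
  have hsplit : fromCols A B *ᵥ v = A *ᵥ (v ∘ Sum.inl) + B *ᵥ (v ∘ Sum.inr) := by
    have : v = Sum.elim (v ∘ Sum.inl) (v ∘ Sum.inr) := by
      funext i; cases i <;> rfl
    rw [this, fromCols_mulVec_sumElim]; simp
  rw [hsplit]
  have hadd : (WithLp.equiv 2 (n → ℝ)).symm (A *ᵥ (v ∘ Sum.inl) + B *ᵥ (v ∘ Sum.inr))
      = (WithLp.equiv 2 (n → ℝ)).symm (A *ᵥ (v ∘ Sum.inl))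
        + (WithLp.equiv 2 (n → ℝ)).symm (B *ᵥ (v ∘ Sum.inr)) := rfl
  rw [hadd]
  have h1 : ‖(WithLp.equiv 2 (n → ℝ)).symm (A *ᵥ (v ∘ Sum.inl))‖
      ≤ ‖A‖ * ‖(WithLp.equiv 2 (n₁ → ℝ)).symm (v ∘ Sum.inl)‖ :=
    A.l2_opNorm_mulVec ((WithLp.equiv 2 (n₁ → ℝ)).symm (v ∘ Sum.inl))
  have h2 : ‖(WithLp.equiv 2 (n → ℝ)).symm (B *ᵥ (v ∘ Sum.inr))‖
      ≤ ‖B‖ * ‖(WithLp.equiv 2 (n₂ → ℝ)).symm (v ∘ Sum.inr)‖ :=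
    B.l2_opNorm_mulVec ((WithLp.equiv 2 (n₂ → ℝ)).symm (v ∘ Sum.inr))
  have hx1 : ‖(WithLp.equiv 2 (n₁ → ℝ)).symm (v ∘ Sum.inl)‖ ≤ ‖x‖ := by
    have hs : ‖(WithLp.equiv 2 (n₁ → ℝ)).symm (v ∘ Sum.inl)‖ ^ 2 ≤ ‖x‖ ^ 2 := by
      have hx : ‖x‖ ^ 2 = ∑ i, v i ^ 2 := by
        have : x = (WithLp.equiv 2 ((n₁ ⊕ n₂) → ℝ)).symm v := rfl
        rw [this, euclid_norm_sq]
      rw [euclid_norm_sq, hx, Fintype.sum_sum_type]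
      have : (0:ℝ) ≤ ∑ i : n₂, v (Sum.inr i) ^ 2 := by positivity
      simp only [Function.comp_apply]
      linarith
    have := Real.sqrt_le_sqrt hs
    rwa [Real.sqrt_sq (norm_nonneg _), Real.sqrt_sq (norm_nonneg _)] at this
  have hx2 : ‖(WithLp.equiv 2 (n₂ → ℝ)).symm (v ∘ Sum.inr)‖ ≤ ‖x‖ := by
    have hs : ‖(WithLp.equiv 2 (n₂ → ℝ)).symm (v ∘ Sum.inr)‖ ^ 2 ≤ ‖x‖ ^ 2 := by
      have hx : ‖x‖ ^ 2 = ∑ i, v i ^ 2 := by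
        have : x = (WithLp.equiv 2 ((n₁ ⊕ n₂) → ℝ)).symm v := rfl
        rw [this, euclid_norm_sq]
      rw [euclid_norm_sq, hx, Fintype.sum_sum_type]
      have : (0:ℝ) ≤ ∑ i : n₁, v (Sum.inl i) ^ 2 := by positivity
      simp only [Function.comp_apply]
      linarith
    have := Real.sqrt_le_sqrt hs
    rwa [Real.sqrt_sq (norm_nonneg _), Real.sqrt_sq (norm_nonneg _)] at this
  calc ‖_ + _‖ ≤ _ + _ := norm_add_le _ _
    _ ≤ ‖A‖ * ‖x‖ + ‖B‖ * ‖x‖ := by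
        have := mul_le_mul_of_nonneg_left hx1 (norm_nonneg A)
        have := mul_le_mul_of_nonneg_left hx2 (norm_nonneg B)
        linarith
    _ = (‖A‖ + ‖B‖) * ‖x‖ := by ring

lemma norm_one_le' {n : Type*} [Fintype n] [DecidableEq n] :
    ‖(1 : Matrix n n ℝ)‖ ≤ 1 := by
  rw [l2_opNorm_def]
  apply ContinuousLinearMap.opNorm_le_bound _ zero_le_one
  intro x
  simp only [LinearEquiv.trans_apply, LinearMap.coe_toContinuousLinearMap']
  rw [Matrix.toEuclideanLin_apply, Matrix.one_mulVec, one_mul]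

end Aux

open scoped Matrix.Norms.L2Operator in
theorem statement_3 {k m' n' : ℕ}
    (A11 : Matrix (Fin k) (Fin k) ℝ) (A12 : Matrix (Fin k) (Fin n') ℝ)
    (A21 : Matrix (Fin m') (Fin k) ℝ) (A22 : Matrix (Fin m') (Fin n') ℝ)
    (hinv : IsUnit A11.det) :
    ∀ j : ℕ, 1 ≤ j → j ≤ k →
      sval (Matrix.fromBlocks A11 A12 A21 (A21 * A11⁻¹ * A12)) j ≤
        (1 + specNorm (A21 * A11⁻¹)) * (1 + specNorm (A11⁻¹ * A12)) * sval A11 j := by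
  intro j hj1 hjk
  set C : Matrix (Fin m') (Fin k) ℝ := A21 * A11⁻¹ with hC
  set R : Matrix (Fin k) (Fin n') ℝ := A11⁻¹ * A12 with hR
  set P : Matrix (Fin k ⊕ Fin m') (Fin k) ℝ := fromRows 1 C with hP
  set Q : Matrix (Fin k) (Fin k ⊕ Fin n') ℝ := fromCols 1 R with hQ
  have hPn : ‖P‖ ≤ 1 + ‖C‖ :=
    le_trans (norm_fromRows_le 1 C) (by gcongr; exact norm_one_le')
  have hQn : ‖Q‖ ≤ 1 + ‖R‖ :=
    le_trans (norm_fromCols_le 1 R) (by gcongr; exact norm_one_le')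
  have e1 : A11 * R = A12 := by
    rw [hR, ← Matrix.mul_assoc, Matrix.mul_nonsing_inv _ hinv, Matrix.one_mul]
  have e2 : C * A11 = A21 := by
    rw [hC, Matrix.mul_assoc, Matrix.nonsing_inv_mul _ hinv, Matrix.mul_one]
  have e3 : C * A11 * R = A21 * A11⁻¹ * A12 := by
    rw [e2, hR, ← Matrix.mul_assoc]
  have hfact : Matrix.fromBlocks A11 A12 A21 (A21 * A11⁻¹ * A12) = P * A11 * Q := by
    rw [hP, hQ, fromRows_mul, fromRows_mul_fromCols]
    simp only [Matrix.one_mul, Matrix.mul_one]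
    rw [e3, e2, e1]
  set c : ℝ := (1 + ‖C‖) * (1 + ‖R‖) with hc
  have hcpos : 0 < c := by positivity
  -- the set defining sval A11 j
  set S : Set ℝ := {x : ℝ | ∃ B : Matrix (Fin k) (Fin k) ℝ, B.rank < j ∧ x = specNorm (A11 - B)}
    with hS
  have hSne : S.Nonempty := by
    refine ⟨specNorm (A11 - 0), 0, ?_, rfl⟩
    rw [Matrix.rank_zero]
    omega
  have hkey : ∀ x ∈ S, sval (Matrix.fromBlocks A11 A12 A21 (A21 * A11⁻¹ * A12)) j ≤ c * x := by
    rintro x ⟨B, hBr, rfl⟩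
    have hmem : specNorm (Matrix.fromBlocks A11 A12 A21 (A21 * A11⁻¹ * A12) - P * B * Q)
        ∈ {y : ℝ | ∃ B' : Matrix (Fin k ⊕ Fin m') (Fin k ⊕ Fin n') ℝ, B'.rank < j ∧
            y = specNorm (Matrix.fromBlocks A11 A12 A21 (A21 * A11⁻¹ * A12) - B')} := by
      refine ⟨P * B * Q, ?_, rfl⟩
      calc (P * B * Q).rank ≤ (P * B).rank := Matrix.rank_mul_le_left _ _
        _ ≤ B.rank := Matrix.rank_mul_le_right _ _
        _ < j := hBr
    have hbdd : BddBelow {y : ℝ | ∃ B' : Matrix (Fin k ⊕ Fin m') (Fin k ⊕ Fin n') ℝ, B'.rank < j ∧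
        y = specNorm (Matrix.fromBlocks A11 A12 A21 (A21 * A11⁻¹ * A12) - B')} := by
      refine ⟨0, ?_⟩
      rintro y ⟨B', _, rfl⟩
      rw [specNorm_eq_l2]
      exact norm_nonneg _
    have h1 : sval (Matrix.fromBlocks A11 A12 A21 (A21 * A11⁻¹ * A12)) j ≤
        specNorm (Matrix.fromBlocks A11 A12 A21 (A21 * A11⁻¹ * A12) - P * B * Q) :=
      csInf_le hbdd hmem
    refine h1.trans ?_
    have hdiff : Matrix.fromBlocks A11 A12 A21 (A21 * A11⁻¹ * A12) - P * B * Q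
        = P * (A11 - B) * Q := by
      rw [hfact, Matrix.mul_sub, Matrix.sub_mul]
    rw [hdiff, specNorm_eq_l2, specNorm_eq_l2 (A11 - B)]
    calc ‖P * (A11 - B) * Q‖ ≤ ‖P * (A11 - B)‖ * ‖Q‖ := Matrix.l2_opNorm_mul _ _
      _ ≤ ‖P‖ * ‖A11 - B‖ * ‖Q‖ := by
          gcongr
          exact Matrix.l2_opNorm_mul _ _
      _ ≤ (1 + ‖C‖) * ‖A11 - B‖ * (1 + ‖R‖) :=
          mul_le_mul (mul_le_mul_of_nonneg_right hPn (norm_nonneg _)) hQn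
            (norm_nonneg _) (by positivity)
      _ = c * ‖A11 - B‖ := by ring
  have hdivle : sval (Matrix.fromBlocks A11 A12 A21 (A21 * A11⁻¹ * A12)) j / c ≤ sInf S := by
    apply le_csInf hSne
    intro x hx
    rw [div_le_iff₀ hcpos]
    calc sval (Matrix.fromBlocks A11 A12 A21 (A21 * A11⁻¹ * A12)) j ≤ c * x := hkey x hx
      _ = x * c := mul_comm _ _
  have : sval (Matrix.fromBlocks A11 A12 A21 (A21 * A11⁻¹ * A12)) j ≤ c * sInf S := by
    rw [← div_le_iff₀' hcpos]
    exact hdivle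
  calc sval (Matrix.fromBlocks A11 A12 A21 (A21 * A11⁻¹ * A12)) j ≤ c * sInf S := this
    _ = (1 + specNorm (A21 * A11⁻¹)) * (1 + specNorm (A11⁻¹ * A12)) * sval A11 j := by
        rw [hc, sval, specNorm_eq_l2, specNorm_eq_l2]
end

section
/- Let A = [B C] ∈ ℝ^{m×n} where B ∈ ℝ^{m×k} is the matrix of the first k columns of A and has rank k (any column permutation is absorbed into the partition), and let B⁺ = (BᵀB)⁻¹Bᵀ denote the pseudoinverse of B. If B is a local maximum volume m×k submatrix of A (i.e., vol(B) ≥ vol(B̂) for every B̂ obtained from B by replacing one column of B with a column of C), then every entry of B⁺·C has absolute value at most 1, i.e., ‖B⁺C‖_max ≤ 1 (equivalently, for a QR factorization B = Q1·R11 the partial QR factorization satisfies the interpolative bound ‖R11⁻¹R12‖_max ≤ 1 with R12 = Q1ᵀC). -/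
open Matrix

namespace MaxVolAux

variable {m k : ℕ}

lemma apply_le_specNorm (A : Matrix (Fin m) (Fin k) ℝ) (x : EuclideanSpace ℝ (Fin k)) :
    ‖Matrix.toEuclideanLin A x‖ ≤ specNorm A * ‖x‖ := by
  simpa [specNorm] using (LinearMap.toContinuousLinearMap (Matrix.toEuclideanLin A)).le_opNorm x


lemma specNorm_le (A : Matrix (Fin m) (Fin k) ℝ) {c : ℝ} (hc : 0 ≤ c)
    (h : ∀ x : EuclideanSpace ℝ (Fin k), ‖Matrix.toEuclideanLin A x‖ ≤ c * ‖x‖) :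
    specNorm A ≤ c :=
  ContinuousLinearMap.opNorm_le_bound _ hc (by simpa using h)


lemma gram_posSemidef (M : Matrix (Fin m) (Fin k) ℝ) : (Mᵀ * M).PosSemidef := by
  have := Matrix.posSemidef_conjTranspose_mul_self M
  rwa [Matrix.conjTranspose_eq_transpose_of_trivial] at this


lemma repr_eq_zero_of_mem_span (V : OrthonormalBasis (Fin k) ℝ (EuclideanSpace ℝ (Fin k)))
    (s : Finset (Fin k)) {x : EuclideanSpace ℝ (Fin k)}
    (hx : x ∈ Submodule.span ℝ (V '' ↑s)) {i : Fin k} (hi : i ∉ s) :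
    V.repr x i = 0 := by
  induction hx using Submodule.span_induction with
  | mem y hy =>
      obtain ⟨l, hl, rfl⟩ := hy
      rw [V.repr_self, EuclideanSpace.single_apply, if_neg]
      rintro rfl; exact hi hl
  | zero => simp
  | add y z hy hz hy' hz' => simp [map_add, PiLp.add_apply, hy', hz']
  | smul a y hy hy' => simp [_root_.map_smul, PiLp.smul_apply, hy']


lemma finrank_span_orthonormal (V : OrthonormalBasis (Fin k) ℝ (EuclideanSpace ℝ (Fin k)))
    (s : Finset (Fin k)) :
    Module.finrank ℝ (Submodule.span ℝ (V '' ↑s)) = s.card := by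
  have hli : LinearIndependent ℝ (fun i : (↑s : Set (Fin k)) => V i) :=
    V.orthonormal.linearIndependent.comp _ Subtype.val_injective
  have h := finrank_span_eq_card hli
  rw [← Set.image_eq_range] at h
  rw [h]; simp


lemma rank_eq_finrank_range_toEuclideanLin (A : Matrix (Fin m) (Fin k) ℝ) :
    A.rank = Module.finrank ℝ (LinearMap.range (Matrix.toEuclideanLin A)) := by
  rw [Matrix.toEuclideanLin_eq_toLin]
  exact A.rank_eq_finrank_range_toLin _ _


lemma gram_eigenvalues_nonneg (M : Matrix (Fin m) (Fin k) ℝ)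
    (hG : (Mᵀ * M).IsHermitian) (i : Fin k) : 0 ≤ hG.eigenvalues i :=
  (gram_posSemidef M).eigenvalues_nonneg i

lemma inner_eq_dot (a b : EuclideanSpace ℝ (Fin k)) :
    (inner ℝ a b : ℝ) = (a : Fin k → ℝ) ⬝ᵥ (b : Fin k → ℝ) := by
  simp [PiLp.inner_apply, dotProduct, RCLike.inner_apply, mul_comm]

lemma dot_gram (M : Matrix (Fin m) (Fin k) ℝ) (a b : Fin k → ℝ) :
    a ⬝ᵥ ((Mᵀ * M) *ᵥ b) = (M *ᵥ a) ⬝ᵥ (M *ᵥ b) := by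
  rw [← Matrix.mulVec_mulVec, Matrix.dotProduct_mulVec a Mᵀ, Matrix.vecMul_transpose]

lemma norm_sq_eq_sum_repr (V : OrthonormalBasis (Fin k) ℝ (EuclideanSpace ℝ (Fin k)))
    (x : EuclideanSpace ℝ (Fin k)) : ‖x‖ ^ 2 = ∑ i, (V.repr x i) ^ 2 := by
  rw [← real_inner_self_eq_norm_sq, ← V.repr.inner_map_map x x, inner_eq_dot]
  simp [dotProduct, sq]

lemma norm_sq_apply (M : Matrix (Fin m) (Fin k) ℝ)
    (hG : (Mᵀ * M).IsHermitian) (x : EuclideanSpace ℝ (Fin k)) :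
    ‖Matrix.toEuclideanLin M x‖ ^ 2
      = ∑ i, hG.eigenvalues i * (hG.eigenvectorBasis.repr x i) ^ 2 := by
  set V := hG.eigenvectorBasis with hV
  have hsym : (Mᵀ * M)ᵀ = Mᵀ * M := by rw [Matrix.transpose_mul, Matrix.transpose_transpose]
  have h1 : ‖Matrix.toEuclideanLin M x‖ ^ 2
      = (inner ℝ x (Matrix.toEuclideanLin (Mᵀ * M) x) : ℝ) := by
    rw [← real_inner_self_eq_norm_sq, inner_eq_dot, inner_eq_dot]
    exact (dot_gram M x x).symm
  have h2 : ∀ i, V.repr (Matrix.toEuclideanLin (Mᵀ * M) x) i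
      = hG.eigenvalues i * V.repr x i := by
    intro i
    rw [V.repr_apply_apply, V.repr_apply_apply, inner_eq_dot, inner_eq_dot]
    show (V i : Fin k → ℝ) ⬝ᵥ ((Mᵀ * M) *ᵥ x) = _
    rw [Matrix.dotProduct_mulVec]
    conv_lhs => rw [← hsym, Matrix.vecMul_transpose]
    have h3 : (Mᵀ * M) *ᵥ (V i : Fin k → ℝ) = hG.eigenvalues i • (V i : Fin k → ℝ) :=
      hG.mulVec_eigenvectorBasis i
    rw [h3, smul_dotProduct]
    rfl
  rw [h1, ← V.repr.inner_map_map x (Matrix.toEuclideanLin (Mᵀ * M) x), inner_eq_dot]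
  show dotProduct _ _ = _
  unfold dotProduct
  refine Finset.sum_congr rfl fun i _ => ?_
  rw [h2 i]; ring

theorem sval_lower (M : Matrix (Fin m) (Fin k) ℝ)
    (hG : (Mᵀ * M).IsHermitian) (e : Equiv.Perm (Fin k))
    (hmono : Antitone (hG.eigenvalues ∘ e)) {j : ℕ} (hj1 : 1 ≤ j) (hjk : j ≤ k)
    (N : Matrix (Fin m) (Fin k) ℝ) (hN : N.rank < j) :
    Real.sqrt (hG.eigenvalues (e ⟨j - 1, by omega⟩)) ≤ specNorm (M - N) := by
  set lam := hG.eigenvalues with hlam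
  set V := hG.eigenvectorBasis with hV
  set d := lam (e ⟨j - 1, by omega⟩) with hd
  have hd0 : 0 ≤ d := gram_eigenvalues_nonneg M hG _
  -- the index set of the top j eigenvalues
  set s : Finset (Fin k) := Finset.image (fun t : Fin j => e (Fin.castLE hjk t)) Finset.univ
    with hs
  have hinj : Function.Injective fun t : Fin j => e (Fin.castLE hjk t) :=
    fun a b h => Fin.castLE_injective hjk (e.injective h)
  have hscard : s.card = j := by
    rw [hs, Finset.card_image_of_injective _ hinj, Finset.card_univ, Fintype.card_fin]
  have hmem : ∀ i : Fin k, i ∈ s ↔ ((e.symm i : Fin k) : ℕ) < j := by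
    intro i
    constructor
    · intro hi
      obtain ⟨t, _, rfl⟩ := Finset.mem_image.mp hi
      simpa using t.isLt
    · intro hi
      refine Finset.mem_image.mpr ⟨⟨(e.symm i : ℕ), hi⟩, Finset.mem_univ _, ?_⟩
      have : Fin.castLE hjk ⟨(e.symm i : ℕ), hi⟩ = e.symm i := by
        apply Fin.ext; rfl
      rw [this, Equiv.apply_symm_apply]
  set Vs : Submodule ℝ (EuclideanSpace ℝ (Fin k)) := Submodule.span ℝ (V '' ↑s) with hVs
  set T' := Matrix.toEuclideanLin N with hT'
  have hrankN : N.rank = Module.finrank ℝ (LinearMap.range T') :=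
    rank_eq_finrank_range_toEuclideanLin N
  have hrn : Module.finrank ℝ (LinearMap.range T') + Module.finrank ℝ (LinearMap.ker T') = k := by
    have := LinearMap.finrank_range_add_finrank_ker T'
    rwa [finrank_euclideanSpace, Fintype.card_fin] at this
  have hVsrank : Module.finrank ℝ Vs = j := by rw [hVs, finrank_span_orthonormal, hscard]
  have hne : Vs ⊓ LinearMap.ker T' ≠ ⊥ := by
    intro hbot
    have h1 := Submodule.finrank_sup_add_finrank_inf_eq Vs (LinearMap.ker T')
    rw [hbot, finrank_bot, hVsrank] at h1
    have h2 : Module.finrank ℝ ↥(Vs ⊔ LinearMap.ker T') ≤ k := by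
      have := Submodule.finrank_le (Vs ⊔ LinearMap.ker T')
      rwa [finrank_euclideanSpace, Fintype.card_fin] at this
    rw [hrankN] at hN
    omega
  obtain ⟨x, hxmem, hx0⟩ := (Submodule.ne_bot_iff _).mp hne
  have hxV : x ∈ Vs := hxmem.1
  have hxker : T' x = 0 := hxmem.2
  -- ‖(M - N) x‖ = ‖M x‖
  have hMN : Matrix.toEuclideanLin (M - N) x = Matrix.toEuclideanLin M x := by
    rw [map_sub, LinearMap.sub_apply, ← hT', hxker, sub_zero]
  -- norm bound
  have hxnorm : Real.sqrt d * ‖x‖ ≤ ‖Matrix.toEuclideanLin M x‖ := by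
    have hsq : d * ‖x‖ ^ 2 ≤ ‖Matrix.toEuclideanLin M x‖ ^ 2 := by
      rw [norm_sq_apply M hG x, norm_sq_eq_sum_repr V x, Finset.mul_sum]
      refine Finset.sum_le_sum fun i _ => ?_
      by_cases hi : i ∈ s
      · have hlt := (hmem i).mp hi
        have hle : e.symm i ≤ (⟨j - 1, by omega⟩ : Fin k) := by
          rw [Fin.le_def]
          simp only []
          omega
        have h2 := hmono hle
        have hdlam : d ≤ lam i := by
          simpa [Function.comp, Equiv.apply_symm_apply] using h2
        exact mul_le_mul_of_nonneg_right hdlam (sq_nonneg _)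
      · have : V.repr x i = 0 := repr_eq_zero_of_mem_span V s hxV hi
        rw [hV] at this
        rw [this]
        simp
    have h1 : Real.sqrt (d * ‖x‖ ^ 2) ≤ Real.sqrt (‖Matrix.toEuclideanLin M x‖ ^ 2) :=
      Real.sqrt_le_sqrt hsq
    rwa [Real.sqrt_mul hd0, Real.sqrt_sq (norm_nonneg _), Real.sqrt_sq (norm_nonneg _)] at h1
  have hxpos : 0 < ‖x‖ := norm_pos_iff.mpr hx0
  have := (apply_le_specNorm (M - N) x)
  rw [hMN] at this
  have := hxnorm.trans this
  exact le_of_mul_le_mul_right this hxpos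

set_option maxHeartbeats 1000000 in
theorem sval_upper (M : Matrix (Fin m) (Fin k) ℝ)
    (hG : (Mᵀ * M).IsHermitian) (e : Equiv.Perm (Fin k))
    (hmono : Antitone (hG.eigenvalues ∘ e)) {j : ℕ} (hj1 : 1 ≤ j) (hjk : j ≤ k) :
    ∃ N : Matrix (Fin m) (Fin k) ℝ, N.rank < j ∧
      specNorm (M - N) ≤ Real.sqrt (hG.eigenvalues (e ⟨j - 1, by omega⟩)) := by
  classical
  set lam := hG.eigenvalues with hlam
  set V := hG.eigenvectorBasis with hV
  set d := lam (e ⟨j - 1, by omega⟩) with hd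
  have hd0 : 0 ≤ d := gram_eigenvalues_nonneg M hG _
  set T := Matrix.toEuclideanLin M with hT
  -- index set of the top (j-1) eigenvalues
  set s : Finset (Fin k) :=
    Finset.image (fun t : Fin (j-1) => e (Fin.castLE (by omega) t)) Finset.univ with hs
  have hinj : Function.Injective fun t : Fin (j-1) => e (Fin.castLE (by omega : j - 1 ≤ k) t) :=
    fun a b h => Fin.castLE_injective _ (e.injective h)
  have hscard : s.card = j - 1 := by
    rw [hs, Finset.card_image_of_injective _ hinj, Finset.card_univ, Fintype.card_fin]
  have hmem : ∀ i : Fin k, i ∈ s ↔ ((e.symm i : Fin k) : ℕ) < j - 1 := by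
    intro i
    constructor
    · intro hi
      obtain ⟨t, _, rfl⟩ := Finset.mem_image.mp hi
      simpa using t.isLt
    · intro hi
      refine Finset.mem_image.mpr ⟨⟨(e.symm i : ℕ), hi⟩, Finset.mem_univ _, ?_⟩
      have h5 : Fin.castLE (by omega : j - 1 ≤ k) ⟨(e.symm i : ℕ), hi⟩ = e.symm i := by
        apply Fin.ext; rfl
      rw [h5, Equiv.apply_symm_apply]
  -- the projection composed with T
  set P : EuclideanSpace ℝ (Fin k) →ₗ[ℝ] EuclideanSpace ℝ (Fin m) :=
    ∑ i ∈ s, LinearMap.smulRight ((innerSL ℝ (V i)).toLinearMap) (T (V i)) with hP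
  have hPapp : ∀ x, P x = ∑ i ∈ s, (V.repr x i) • T (V i) := by
    intro x
    rw [hP, LinearMap.sum_apply]
    refine Finset.sum_congr rfl fun i _ => ?_
    rw [LinearMap.smulRight_apply]
    congr 1
    · exact (V.repr_apply_apply x i).symm
  set N := Matrix.toEuclideanLin.symm P with hN
  have hNT : Matrix.toEuclideanLin N = P := by rw [hN, LinearEquiv.apply_symm_apply]
  refine ⟨N, ?_, ?_⟩
  · -- rank bound
    rw [rank_eq_finrank_range_toEuclideanLin, hNT]
    have hsub : LinearMap.range P ≤ Submodule.span ℝ ↑(s.image fun i => T (V i)) := by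
      rintro y ⟨x, rfl⟩
      rw [hPapp]
      refine Submodule.sum_mem _ fun i hi => Submodule.smul_mem _ _ ?_
      exact Submodule.subset_span (by simpa using Finset.mem_image_of_mem _ hi)
    have h1 : Module.finrank ℝ (LinearMap.range P)
        ≤ Module.finrank ℝ (Submodule.span ℝ ↑(s.image fun i => T (V i))) :=
      Submodule.finrank_mono hsub
    have h2 := finrank_span_finset_le_card (R := ℝ) (s.image fun i => T (V i))
    have h3 : (s.image fun i => T (V i)).card ≤ s.card := Finset.card_image_le
    calc Module.finrank ℝ (LinearMap.range P) ≤ _ := h1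
      _ ≤ _ := h2
      _ ≤ s.card := h3
      _ = j - 1 := hscard
      _ < j := by omega
  · -- norm bound
    refine specNorm_le _ (Real.sqrt_nonneg _) fun x => ?_
    set y : EuclideanSpace ℝ (Fin k) := x - ∑ i ∈ s, (V.repr x i) • V i with hy
    have hTy : Matrix.toEuclideanLin (M - N) x = T y := by
      rw [map_sub, LinearMap.sub_apply, hNT, hy, map_sub, map_sum]
      simp only [_root_.map_smul]
      rw [hPapp, ← hT]
    have hreps : ∀ i : Fin k, V.repr y i = if i ∈ s then 0 else V.repr x i := by
      intro i
      rw [hy, V.repr_apply_apply, inner_sub_right, inner_sum]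
      have h6 : ∀ l ∈ s, (inner ℝ (V i) ((V.repr x l) • V l) : ℝ)
          = (V.repr x l) * if i = l then 1 else 0 := by
        intro l _
        rw [real_inner_smul_right]
        rw [orthonormal_iff_ite.mp V.orthonormal i l]
      rw [Finset.sum_congr rfl h6, ← V.repr_apply_apply x i]
      by_cases hi : i ∈ s
      · rw [Finset.sum_eq_single i (fun b _ hb => by rw [if_neg (Ne.symm hb), mul_zero])
          (fun h => absurd hi h), if_pos rfl, mul_one, if_pos hi, sub_self]
      · rw [if_neg hi, Finset.sum_eq_zero (fun b hb => by
          rw [if_neg (fun h : i = b => hi (h ▸ hb)), mul_zero]), sub_zero]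
    -- norm bound on T y
    have hsq : ‖T y‖ ^ 2 ≤ d * ‖x‖ ^ 2 := by
      rw [hT, norm_sq_apply M hG y, norm_sq_eq_sum_repr V x, Finset.mul_sum]
      refine Finset.sum_le_sum fun i _ => ?_
      rw [← hV, hreps i]
      by_cases hi : i ∈ s
      · rw [if_pos hi]
        simpa using mul_nonneg hd0 (sq_nonneg (V.repr x i))
      · rw [if_neg hi]
        have hge : ((e.symm i : Fin k) : ℕ) ≥ j - 1 := le_of_not_gt fun h => hi ((hmem i).mpr h)
        have hle : (⟨j - 1, by omega⟩ : Fin k) ≤ e.symm i := by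
          rw [Fin.le_def]; simpa using hge
        have h2 := hmono hle
        have hlami : lam i ≤ d := by
          simpa [Function.comp, Equiv.apply_symm_apply] using h2
        exact mul_le_mul_of_nonneg_right hlami (sq_nonneg _)
    have h8 : ‖T y‖ ≤ Real.sqrt d * ‖x‖ := by
      have := Real.sqrt_le_sqrt hsq
      rwa [Real.sqrt_sq (norm_nonneg _), Real.sqrt_mul hd0, Real.sqrt_sq (norm_nonneg _)] at this
    rw [hTy]
    exact h8

lemma exists_antitone_perm (f : Fin k → ℝ) :
    ∃ e : Equiv.Perm (Fin k), Antitone (f ∘ e) := by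
  refine ⟨Tuple.sort (-f), fun a b hab => ?_⟩
  have := Tuple.monotone_sort (-f) hab
  simpa using this

theorem sval_eq_sqrt (M : Matrix (Fin m) (Fin k) ℝ)
    (hG : (Mᵀ * M).IsHermitian) (e : Equiv.Perm (Fin k))
    (hmono : Antitone (hG.eigenvalues ∘ e)) {j : ℕ} (hj1 : 1 ≤ j) (hjk : j ≤ k) :
    sval M j = Real.sqrt (hG.eigenvalues (e ⟨j - 1, by omega⟩)) := by
  obtain ⟨N, hNr, hNle⟩ := sval_upper M hG e hmono hj1 hjk
  have hmemS : specNorm (M - N)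
      ∈ {x : ℝ | ∃ B : Matrix (Fin m) (Fin k) ℝ, B.rank < j ∧ x = specNorm (M - B)} :=
    ⟨N, hNr, rfl⟩
  have hlb : ∀ y ∈ {x : ℝ | ∃ B : Matrix (Fin m) (Fin k) ℝ, B.rank < j ∧ x = specNorm (M - B)},
      Real.sqrt (hG.eigenvalues (e ⟨j - 1, by omega⟩)) ≤ y := by
    rintro y ⟨N', hr, rfl⟩
    exact sval_lower M hG e hmono hj1 hjk N' hr
  unfold sval
  refine le_antisymm ?_ ?_
  · exact (csInf_le ⟨_, hlb⟩ hmemS).trans hNle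
  · exact le_csInf ⟨_, hmemS⟩ hlb

lemma prod_sqrt {ι : Type*} (s : Finset ι) (f : ι → ℝ) (hf : ∀ i ∈ s, 0 ≤ f i) :
    ∏ i ∈ s, Real.sqrt (f i) = Real.sqrt (∏ i ∈ s, f i) := by
  classical
  induction s using Finset.induction with
  | empty => simp
  | @insert a s ha ih =>
      rw [Finset.prod_insert ha, Finset.prod_insert ha,
        ih (fun i hi => hf i (Finset.mem_insert_of_mem hi)),
        ← Real.sqrt_mul (hf a (Finset.mem_insert_self a s))]

theorem vol_eq_sqrt_det (hkm : k ≤ m) (M : Matrix (Fin m) (Fin k) ℝ) :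
    vol M = Real.sqrt ((Mᵀ * M).det) := by
  have hG : (Mᵀ * M).IsHermitian := (gram_posSemidef M).1
  obtain ⟨e, hmono⟩ := exists_antitone_perm hG.eigenvalues
  have hmin : min (Fintype.card (Fin m)) (Fintype.card (Fin k)) = k := by
    simp [Fintype.card_fin, min_eq_right hkm]
  rw [vol, hmin]
  set f : ℕ → ℝ := fun j =>
    if h : j - 1 < k then Real.sqrt (hG.eigenvalues (e ⟨j - 1, h⟩)) else 0 with hf
  have h1 : ∀ j ∈ Finset.Icc 1 k, sval M j = f j := by
    intro j hj
    obtain ⟨hj1, hjk⟩ := Finset.mem_Icc.mp hj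
    rw [sval_eq_sqrt M hG e hmono hj1 hjk, hf]
    dsimp only
    rw [dif_pos (show j - 1 < k by omega)]
  rw [Finset.prod_congr rfl h1]
  have h2 : ∏ j ∈ Finset.Icc 1 k, f j = ∏ i : Fin k, Real.sqrt (hG.eigenvalues (e i)) := by
    refine Finset.prod_bij' (fun j hj => (⟨j - 1, by
        obtain ⟨h1', h2'⟩ := Finset.mem_Icc.mp hj; omega⟩ : Fin k))
      (fun i _ => (i : ℕ) + 1) ?_ ?_ ?_ ?_ ?_
    · intro j hj; exact Finset.mem_univ _
    · intro i _; simp [Finset.mem_Icc]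
    · intro j hj; obtain ⟨h1', h2'⟩ := Finset.mem_Icc.mp hj; dsimp only; omega
    · intro i _; apply Fin.ext; dsimp only; simp
    · intro j hj
      obtain ⟨h1', h2'⟩ := Finset.mem_Icc.mp hj
      rw [hf]
      dsimp only
      rw [dif_pos (show j - 1 < k by omega)]
  rw [h2, Equiv.prod_comp e (fun i => Real.sqrt (hG.eigenvalues i)),
    prod_sqrt Finset.univ _ (fun i _ => gram_eigenvalues_nonneg M hG i)]
  congr 1
  rw [hG.det_eq_prod_eigenvalues]
  norm_num

end MaxVolAux

open MaxVolAux in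
theorem statement_6 {m k n' : ℕ}
    (B : Matrix (Fin m) (Fin k) ℝ) (C : Matrix (Fin m) (Fin n') ℝ)
    (hrank : B.rank = k)
    (hmax : ∀ (i₀ : Fin k) (t : Fin n'),
      vol ((Matrix.fromCols B C).submatrix id
        (Function.update (Sum.inl : Fin k → Fin k ⊕ Fin n') i₀ (Sum.inr t))) ≤ vol B) :
    ∀ i j, |((Bᵀ * B)⁻¹ * Bᵀ * C) i j| ≤ 1 := by
  intro i₀ t
  set G := Bᵀ * B with hGdef
  -- k ≤ m
  have hkm : k ≤ m := by
    have := B.rank_le_card_height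
    rw [hrank, Fintype.card_fin] at this
    exact this
  -- B has trivial kernel
  have hBinj : ∀ x : Fin k → ℝ, B *ᵥ x = 0 → x = 0 := by
    intro x hx
    have h1 : B.rank = Module.finrank ℝ (LinearMap.range B.mulVecLin) := rfl
    have h2 := LinearMap.finrank_range_add_finrank_ker B.mulVecLin
    rw [Module.finrank_fintype_fun_eq_card, Fintype.card_fin, ← h1, hrank] at h2
    have h3 : Module.finrank ℝ (LinearMap.ker B.mulVecLin) = 0 := by omega
    have h4 : LinearMap.ker B.mulVecLin = ⊥ := Submodule.finrank_eq_zero.mp h3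
    have h5 : x ∈ LinearMap.ker B.mulVecLin := by
      rw [LinearMap.mem_ker, Matrix.mulVecLin_apply]; exact hx
    rw [h4, Submodule.mem_bot] at h5
    exact h5
  have hdotpos : ∀ v : Fin m → ℝ, v ≠ 0 → 0 < v ⬝ᵥ v := by
    intro v hv
    have h1 : 0 ≤ v ⬝ᵥ v := Finset.sum_nonneg fun i _ => mul_self_nonneg _
    rcases h1.lt_or_eq with h | h
    · exact h
    · exact absurd ((dotProduct_self_eq_zero).mp h.symm) hv
  have hstar : ∀ {p : ℕ} (v : Fin p → ℝ), star v = v := fun v => funext fun i => by simp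
  -- G is positive definite
  have hGpd : G.PosDef := by
    refine Matrix.PosDef.of_dotProduct_mulVec_pos ?_ fun x hx => ?_
    · rw [Matrix.IsHermitian, Matrix.conjTranspose_eq_transpose_of_trivial, hGdef,
        Matrix.transpose_mul, Matrix.transpose_transpose]
    · rw [hstar, hGdef, dot_gram]
      exact hdotpos _ (fun h => hx (hBinj x h))
  have hdetG : 0 < G.det := hGpd.det_pos
  have hGunit : IsUnit G.det := isUnit_iff_ne_zero.mpr hdetG.ne'
  -- the replaced-column data
  set ccol : Fin m → ℝ := fun p => C p t with hccol
  set w : Fin k → ℝ := (G⁻¹ * Bᵀ) *ᵥ ccol with hw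
  have htarget : ((Bᵀ * B)⁻¹ * Bᵀ * C) i₀ t = w i₀ := by
    rw [hw]
    simp [Matrix.mul_apply, Matrix.mulVec, dotProduct, hGdef, hccol]
  rw [htarget]
  set r : Fin m → ℝ := ccol - B *ᵥ w with hr
  have hBr : Bᵀ *ᵥ r = 0 := by
    rw [hr, Matrix.mulVec_sub, hw, Matrix.mulVec_mulVec, Matrix.mulVec_mulVec,
      ← Matrix.mul_assoc, show Bᵀ * B = G from rfl,
      Matrix.mul_nonsing_inv _ hGunit, Matrix.one_mul, sub_self]
  by_cases hw0 : w i₀ = 0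
  · rw [hw0]; norm_num
  -- main case
  set E : Matrix (Fin k) (Fin k) ℝ := Matrix.updateCol 1 i₀ w with hE
  have hdetE : E.det = w i₀ := by
    rw [hE, ← Matrix.cramer_apply, Matrix.cramer_one]
    rfl
  have hEunit : IsUnit E.det := by rw [hdetE]; exact isUnit_iff_ne_zero.mpr hw0
  set Bhat := (Matrix.fromCols B C).submatrix id
      (Function.update (Sum.inl : Fin k → Fin k ⊕ Fin n') i₀ (Sum.inr t)) with hBhat
  set R : Matrix (Fin m) (Fin k) ℝ := Matrix.of (fun p q => if q = i₀ then r p else 0) with hR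
  have hBhatE : Bhat = B * E + R := by
    ext p q
    rw [hBhat, Matrix.submatrix_apply, Function.update_apply]
    by_cases h : q = i₀
    · subst h
      rw [if_pos rfl]
      have h1 : (B * E) p q = (B *ᵥ w) p := by
        rw [Matrix.mul_apply, Matrix.mulVec, dotProduct]
        refine Finset.sum_congr rfl fun l _ => ?_
        rw [hE, Matrix.updateCol_apply, if_pos rfl]
      rw [Matrix.add_apply, h1, hR]
      simp [hr, hccol]
    · rw [if_neg h]
      have h1 : (B * E) p q = B p q := by
        rw [Matrix.mul_apply]
        have h2 : ∀ l, B p l * E l q = B p l * (1 : Matrix (Fin k) (Fin k) ℝ) l q := by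
          intro l
          rw [hE, Matrix.updateCol_apply, if_neg h]
        rw [Finset.sum_congr rfl fun l _ => h2 l, ← Matrix.mul_apply, Matrix.mul_one]
      rw [Matrix.add_apply, h1, hR]
      simp [h]
  -- cross terms vanish
  have hRB : Rᵀ * B = 0 := by
    ext q l
    rw [Matrix.mul_apply, Matrix.zero_apply]
    by_cases h : q = i₀
    · subst h
      have := congrFun hBr l
      rw [Matrix.mulVec, dotProduct] at this
      simp only [Matrix.transpose_apply, Pi.zero_apply] at this ⊢
      rw [← this]
      refine Finset.sum_congr rfl fun p _ => ?_
      rw [hR]; simp [mul_comm]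
    · refine Finset.sum_eq_zero fun p _ => ?_
      rw [Matrix.transpose_apply, hR]
      simp [h]
  set X : Matrix (Fin k) (Fin k) ℝ := Eᵀ * G * E with hX
  set ρ : ℝ := r ⬝ᵥ r with hρ
  have hρ0 : 0 ≤ ρ := Finset.sum_nonneg fun i _ => mul_self_nonneg _
  have hRR : Rᵀ * R = Matrix.of (fun p q => if q = i₀ then (Pi.single i₀ ρ : Fin k → ℝ) p else 0) := by
    ext p q
    rw [Matrix.mul_apply, Matrix.of_apply]
    by_cases hp : p = i₀ <;> by_cases hq : q = i₀ <;>
      simp [hR, hp, hq, Pi.single_apply, hρ, dotProduct]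
  have hGhat : Bhatᵀ * Bhat
      = Matrix.updateCol X i₀ ((fun p => X p i₀) + Pi.single i₀ ρ) := by
    have h1 : Bhatᵀ * Bhat = X + Rᵀ * R := by
      rw [hBhatE, Matrix.transpose_add, Matrix.add_mul, Matrix.mul_add, Matrix.mul_add,
        Matrix.transpose_mul]
      have h2 : Rᵀ * (B * E) = 0 := by rw [← Matrix.mul_assoc, hRB, Matrix.zero_mul]
      have h3 : (Eᵀ * Bᵀ) * R = 0 := by
        have := congrArg Matrix.transpose hRB
        rw [Matrix.transpose_mul, Matrix.transpose_transpose, Matrix.transpose_zero] at this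
        rw [Matrix.mul_assoc, this, Matrix.mul_zero]
      rw [h2, h3, add_zero, zero_add]
      rw [hX, hGdef, Matrix.mul_assoc, Matrix.mul_assoc, Matrix.mul_assoc]
    rw [h1, hRR]
    ext p q
    rw [Matrix.updateCol_apply, Matrix.add_apply, Matrix.of_apply]
    by_cases hq : q = i₀
    · subst hq; rw [if_pos rfl]; simp
    · rw [if_neg hq, if_neg hq, add_zero]
  -- determinant inequality
  have hGsym : Gᵀ = G := by rw [hGdef, Matrix.transpose_mul, Matrix.transpose_transpose]
  have hXsym : Xᵀ = X := by
    rw [hX, Matrix.transpose_mul, Matrix.transpose_mul, Matrix.transpose_transpose,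
      hGsym, ← Matrix.mul_assoc]
  have hdetGhat : (Bhatᵀ * Bhat).det = X.det + ρ * (X.adjugate i₀ i₀) := by
    rw [hGhat, Matrix.det_updateCol_add, Matrix.updateCol_eq_self]
    congr 1
    have hsingle : (Pi.single i₀ ρ : Fin k → ℝ) = ρ • (Pi.single i₀ 1 : Fin k → ℝ) := by
      funext p; by_cases h : p = i₀ <;> simp [Pi.single_apply, h]
    rw [hsingle, Matrix.det_updateCol_smul]
    congr 1
    rw [Matrix.adjugate_apply]
    conv_lhs => rw [show X.updateCol i₀ (Pi.single i₀ 1)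
        = (Xᵀ.updateRow i₀ (Pi.single i₀ 1))ᵀ from by
      rw [Matrix.updateRow_transpose, Matrix.transpose_transpose]]
    rw [Matrix.det_transpose, hXsym]
  have hXpd : X.PosDef := by
    refine Matrix.PosDef.of_dotProduct_mulVec_pos ?_ fun x hx => ?_
    · show Xᴴ = X
      rw [Matrix.conjTranspose_eq_transpose_of_trivial, hXsym]
    · rw [hstar, hX]
      have h1 : (Eᵀ * G * E) *ᵥ x = Eᵀ *ᵥ (G *ᵥ (E *ᵥ x)) := by
        rw [Matrix.mulVec_mulVec, Matrix.mulVec_mulVec]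
      rw [h1, Matrix.dotProduct_mulVec x Eᵀ, Matrix.vecMul_transpose,
        show G = Bᵀ * B from rfl, dot_gram]
      have hEx : E *ᵥ x ≠ 0 := by
        intro h
        apply hx
        have h2 : E⁻¹ *ᵥ (E *ᵥ x) = x := by
          rw [Matrix.mulVec_mulVec, Matrix.nonsing_inv_mul _ hEunit, Matrix.one_mulVec]
        rw [← h2, h, Matrix.mulVec_zero]
      exact hdotpos _ (fun h => hEx (hBinj _ h))
  have hdetX : 0 < X.det := hXpd.det_pos
  have hXinv : X⁻¹.PosDef := hXpd.inv
  have hXinvdiag : 0 ≤ X⁻¹ i₀ i₀ := by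
    have hne : (Pi.single i₀ 1 : Fin k → ℝ) ≠ 0 := by
      intro h
      have := congrFun h i₀
      simp at this
    have h2 := hXinv.dotProduct_mulVec_pos hne
    rw [hstar] at h2
    have h3 : (Pi.single i₀ 1 : Fin k → ℝ) ⬝ᵥ (X⁻¹ *ᵥ Pi.single i₀ 1) = X⁻¹ i₀ i₀ := by
      rw [single_dotProduct, Matrix.mulVec_single]
      simp
    rw [h3] at h2
    exact h2.le
  have hadj : 0 ≤ X.adjugate i₀ i₀ := by
    have h1 : X⁻¹ i₀ i₀ = (X.det)⁻¹ * X.adjugate i₀ i₀ := by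
      rw [Matrix.inv_def, Ring.inverse_eq_inv]
      simp
    have h2 : X.det * X⁻¹ i₀ i₀ = X.adjugate i₀ i₀ := by
      rw [h1]
      field_simp
    rw [← h2]
    exact mul_nonneg hdetX.le hXinvdiag
  have hdetXval : X.det = (w i₀) ^ 2 * G.det := by
    rw [hX, Matrix.det_mul, Matrix.det_mul, Matrix.det_transpose, hdetE]; ring
  have hge : (w i₀) ^ 2 * G.det ≤ (Bhatᵀ * Bhat).det := by
    rw [hdetGhat, ← hdetXval]
    nlinarith [mul_nonneg hρ0 hadj]
  have hvolB : vol B = Real.sqrt G.det := vol_eq_sqrt_det hkm B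
  have hvolBhat : vol Bhat = Real.sqrt ((Bhatᵀ * Bhat).det) := vol_eq_sqrt_det hkm Bhat
  have hchain : |w i₀| * Real.sqrt G.det ≤ 1 * Real.sqrt G.det := by
    have h1 : Real.sqrt ((w i₀) ^ 2 * G.det) ≤ Real.sqrt ((Bhatᵀ * Bhat).det) :=
      Real.sqrt_le_sqrt hge
    rw [Real.sqrt_mul (sq_nonneg _), Real.sqrt_sq_eq_abs] at h1
    rw [one_mul]
    calc |w i₀| * Real.sqrt G.det ≤ Real.sqrt ((Bhatᵀ * Bhat).det) := h1
      _ = vol Bhat := hvolBhat.symm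
      _ ≤ vol B := hmax i₀ t
      _ = Real.sqrt G.det := hvolB
  have hsqrtpos : 0 < Real.sqrt G.det := Real.sqrt_pos.mpr hdetG
  exact le_of_mul_le_mul_right hchain hsqrtpos
end

section
/- Let A ∈ ℝ^{m×n} and let J be a set of k column indices such that the m×k submatrix A(:,J) has rank k and is a local maximum volume m×k submatrix of A (i.e., vol(A(:,J)) ≥ vol(A(:,Ĵ)) for every index set Ĵ of size k differing from J in at most one element). Then A(:,J)ᵀ·A(:,J) is a local maximum volume k×k submatrix of AᵀA; more precisely, for all index sets Ĵ and J̃ of size k each differing from J in at most one element, vol(A(:,Ĵ)ᵀ·A(:,J̃)) ≤ vol(A(:,J)ᵀ·A(:,J)). -/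
open Matrix

open scoped Matrix.Norms.L2Operator

namespace EY

variable {m n : ℕ}

lemma specNorm_eq_norm (A : Matrix (Fin m) (Fin n) ℝ) : specNorm A = ‖A‖ := rfl

lemma norm_symm_sq (v : Fin m → ℝ) :
    ‖(WithLp.equiv 2 (Fin m → ℝ)).symm v‖ ^ 2 = v ⬝ᵥ v := by
  rw [EuclideanSpace.norm_eq, Real.sq_sqrt (by positivity)]
  simp [dotProduct, sq_abs, pow_two]

lemma dot_mulVec_le (A : Matrix (Fin m) (Fin n) ℝ) (x : Fin n → ℝ) :
    (A *ᵥ x) ⬝ᵥ (A *ᵥ x) ≤ specNorm A ^ 2 * (x ⬝ᵥ x) := by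
  have h := Matrix.l2_opNorm_mulVec A ((WithLp.equiv 2 (Fin n → ℝ)).symm x)
  rw [specNorm_eq_norm]
  calc (A *ᵥ x) ⬝ᵥ (A *ᵥ x)
      = ‖(WithLp.equiv 2 (Fin m → ℝ)).symm (A *ᵥ x)‖ ^ 2 := (norm_symm_sq _).symm
    _ ≤ (‖A‖ * ‖(WithLp.equiv 2 (Fin n → ℝ)).symm x‖) ^ 2 := by
        apply pow_le_pow_left₀ (norm_nonneg _) ?_
        exact h
    _ = ‖A‖ ^ 2 * (x ⬝ᵥ x) := by rw [mul_pow, norm_symm_sq]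

lemma specNorm_le_bound (A : Matrix (Fin m) (Fin n) ℝ) {c : ℝ} (hc : 0 ≤ c)
    (h : ∀ x : Fin n → ℝ, (A *ᵥ x) ⬝ᵥ (A *ᵥ x) ≤ c ^ 2 * (x ⬝ᵥ x)) :
    specNorm A ≤ c := by
  apply ContinuousLinearMap.opNorm_le_bound _ hc
  intro x
  have hx : ((LinearMap.toContinuousLinearMap (Matrix.toEuclideanLin A)) x : EuclideanSpace ℝ (Fin m))
      = (WithLp.equiv 2 (Fin m → ℝ)).symm (A *ᵥ (WithLp.equiv 2 (Fin n → ℝ) x)) := rfl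
  have h2 : ‖x‖ ^ 2 = (WithLp.equiv 2 (Fin n → ℝ) x) ⬝ᵥ (WithLp.equiv 2 (Fin n → ℝ) x) := by
    rw [← norm_symm_sq]; congr 1
  apply le_of_pow_le_pow_left₀ two_ne_zero (mul_nonneg hc (norm_nonneg _))
  rw [mul_pow, hx, norm_symm_sq, h2]
  exact h _

variable (A : Matrix (Fin m) (Fin n) ℝ)

lemma psdAtA : (Aᵀ * A).PosSemidef := by
  rw [← conjTranspose_eq_transpose_of_trivial]
  exact posSemidef_conjTranspose_mul_self A

lemma hermAtA : (Aᵀ * A).IsHermitian := (psdAtA A).1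

/-- eigenvalues of AᵀA -/
noncomputable def mu : Fin n → ℝ := (hermAtA A).eigenvalues

/-- eigenvectors of AᵀA, as plain functions -/
noncomputable def evec (i : Fin n) : Fin n → ℝ := ⇑((hermAtA A).eigenvectorBasis i)

/-- permutation so that `mu ∘ q` is decreasing -/
noncomputable def q : Equiv.Perm (Fin n) := (Fin.revPerm).trans (Tuple.sort (mu A))

lemma mu_nonneg (i : Fin n) : 0 ≤ mu A i := (psdAtA A).eigenvalues_nonneg i

lemma mu_q_antitone : Antitone (fun j => mu A (q A j)) := by
  intro i j hij
  exact Tuple.monotone_sort (mu A) (Fin.rev_le_rev.mpr hij)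

lemma evec_orth (i j : Fin n) : evec A i ⬝ᵥ evec A j = if i = j then 1 else 0 := by
  have h := orthonormal_iff_ite.mp ((hermAtA A).eigenvectorBasis).orthonormal i j
  rw [PiLp.inner_apply] at h
  simpa [dotProduct, RCLike.inner_apply, evec, mul_comm] using h

lemma evec_eig (i : Fin n) : (Aᵀ * A) *ᵥ evec A i = mu A i • evec A i :=
  (hermAtA A).mulVec_eigenvectorBasis i

lemma expand (x : Fin n → ℝ) : ∑ i, (evec A i ⬝ᵥ x) • evec A i = x := by
  have h := ((hermAtA A).eigenvectorBasis).sum_repr ((WithLp.equiv 2 (Fin n → ℝ)).symm x)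
  have h2 : ∀ i, ((hermAtA A).eigenvectorBasis).repr ((WithLp.equiv 2 (Fin n → ℝ)).symm x) i
      = evec A i ⬝ᵥ x := by
    intro i
    rw [OrthonormalBasis.repr_apply_apply, PiLp.inner_apply]
    simp [dotProduct, RCLike.inner_apply, evec, mul_comm]
  calc ∑ i, (evec A i ⬝ᵥ x) • evec A i
      = ∑ i, (((hermAtA A).eigenvectorBasis).repr ((WithLp.equiv 2 (Fin n → ℝ)).symm x) i)
          • evec A i := by simp_rw [h2]
    _ = x := by simpa [evec] using congrArg WithLp.ofLp h

lemma dotProduct_finsum {p : ℕ} {ι : Type*} (s : Finset ι) (x : Fin p → ℝ) (f : ι → Fin p → ℝ) :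
    x ⬝ᵥ (∑ i ∈ s, f i) = ∑ i ∈ s, x ⬝ᵥ f i := by
  simp only [dotProduct, Finset.sum_apply, Finset.mul_sum]
  rw [Finset.sum_comm]

lemma dot_self_eq (x : Fin n → ℝ) : x ⬝ᵥ x = ∑ i, (evec A i ⬝ᵥ x) ^ 2 := by
  nth_rw 2 [← expand A x]
  rw [dotProduct_finsum]
  apply Finset.sum_congr rfl
  intro i _
  rw [dotProduct_smul, smul_eq_mul, dotProduct_comm, pow_two]

lemma dot_AtA (x : Fin n → ℝ) :
    (A *ᵥ x) ⬝ᵥ (A *ᵥ x) = x ⬝ᵥ ((Aᵀ * A) *ᵥ x) := by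
  rw [← mulVec_mulVec, dotProduct_mulVec, mulVec_transpose, dotProduct_comm]

lemma dot_H_eq (x : Fin n → ℝ) :
    (A *ᵥ x) ⬝ᵥ (A *ᵥ x) = ∑ i, mu A i * (evec A i ⬝ᵥ x) ^ 2 := by
  rw [dot_AtA]
  nth_rw 2 [← expand A x]
  rw [← mulVecLin_apply, map_sum]
  rw [dotProduct_finsum]
  apply Finset.sum_congr rfl
  intro i _
  rw [map_smul ((Aᵀ * A).mulVecLin), mulVecLin_apply, evec_eig, smul_smul, dotProduct_smul,
    smul_eq_mul, dotProduct_comm, pow_two]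
  ring

lemma sval_nonneg (A : Matrix (Fin m) (Fin n) ℝ) (j : ℕ) : 0 ≤ sval A j := by
  apply Real.sInf_nonneg
  rintro x ⟨B, -, rfl⟩
  rw [specNorm_eq_norm]; exact norm_nonneg _

lemma sval_bdd (A : Matrix (Fin m) (Fin n) ℝ) (j : ℕ) :
    BddBelow {x : ℝ | ∃ B : Matrix (Fin m) (Fin n) ℝ, B.rank < j ∧ x = specNorm (A - B)} :=
  ⟨0, by rintro x ⟨B, -, rfl⟩; rw [specNorm_eq_norm]; exact norm_nonneg _⟩

lemma sval_le_sqrt_mu (j : Fin n) : sval A (j.val + 1) ≤ Real.sqrt (mu A (q A j)) := by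
  classical
  set e : Fin j.val → Fin n := fun i => q A (Fin.castLE j.isLt.le i) with he
  set W : Matrix (Fin n) (Fin j.val) ℝ := Matrix.of (fun r i => evec A (e i) r) with hW
  set B : Matrix (Fin m) (Fin n) ℝ := A * (W * Wᵀ) with hB
  have hrank : B.rank < j.val + 1 := by
    have h1 : B.rank ≤ (W * Wᵀ).rank := rank_mul_le_right _ _
    have h2 : (W * Wᵀ).rank ≤ W.rank := rank_mul_le_left _ _
    have h3 : W.rank ≤ j.val := by simpa using W.rank_le_card_width
    omega
  refine le_trans (csInf_le (sval_bdd A _) ⟨B, hrank, rfl⟩) ?_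
  apply specNorm_le_bound _ (Real.sqrt_nonneg _)
  intro x
  rw [Real.sq_sqrt (mu_nonneg A _)]
  set y : Fin n → ℝ := x - (W * Wᵀ) *ᵥ x with hy
  have hAB : (A - B) *ᵥ x = A *ᵥ y := by
    rw [sub_mulVec, hB, ← mulVec_mulVec, ← mulVec_sub]
  have hPx : (W * Wᵀ) *ᵥ x = ∑ i, (evec A (e i) ⬝ᵥ x) • evec A (e i) := by
    ext r
    rw [← mulVec_mulVec]
    simp only [mulVec, dotProduct, of_apply, transpose_apply, Finset.sum_apply, Pi.smul_apply,
      smul_eq_mul, hW]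
    exact Finset.sum_congr rfl fun i _ => mul_comm _ _
  have hinj : Function.Injective e := fun a b hab =>
    Fin.castLE_injective _ ((q A).injective hab)
  have hcy : ∀ r : Fin n, evec A r ⬝ᵥ y =
      if r ∈ Finset.image e Finset.univ then 0 else evec A r ⬝ᵥ x := by
    intro r
    rw [hy, dotProduct_sub, hPx, dotProduct_finsum]
    have h1 : ∀ i, evec A r ⬝ᵥ ((evec A (e i) ⬝ᵥ x) • evec A (e i))
        = if r = e i then evec A (e i) ⬝ᵥ x else 0 := by
      intro i
      rw [dotProduct_smul, smul_eq_mul, evec_orth]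
      split <;> simp
    simp_rw [h1]
    rw [← Finset.sum_image (g := e) (f := fun s => if r = s then evec A s ⬝ᵥ x else 0)
      (fun a _ b _ hab => hinj hab)]
    rw [Finset.sum_ite_eq]
    split <;> rename_i hmem
    · simp
    · simp
  have hysq : ∀ r, (evec A r ⬝ᵥ y) ^ 2 ≤ (evec A r ⬝ᵥ x) ^ 2 := by
    intro r
    rw [hcy r]
    split
    · simpa using sq_nonneg _
    · exact le_rfl
  calc ((A - B) *ᵥ x) ⬝ᵥ ((A - B) *ᵥ x) = (A *ᵥ y) ⬝ᵥ (A *ᵥ y) := by rw [hAB]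
    _ = ∑ r, mu A r * (evec A r ⬝ᵥ y) ^ 2 := dot_H_eq A y
    _ = ∑ t, mu A (q A t) * (evec A (q A t) ⬝ᵥ y) ^ 2 :=
        (Equiv.sum_comp (q A) (fun r => mu A r * (evec A r ⬝ᵥ y) ^ 2)).symm
    _ ≤ ∑ t, mu A (q A j) * (evec A (q A t) ⬝ᵥ y) ^ 2 := by
        apply Finset.sum_le_sum
        intro t _
        by_cases ht : (t : ℕ) < (j : ℕ)
        · have hmem : q A t ∈ Finset.image e Finset.univ := by
            refine Finset.mem_image.mpr ⟨⟨(t : ℕ), ht⟩, Finset.mem_univ _, ?_⟩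
            show q A (Fin.castLE _ ⟨(t : ℕ), ht⟩) = q A t
            congr 1
          rw [hcy, if_pos hmem]
          simp
        · have hj : j ≤ t := by rw [Fin.le_def]; omega
          exact mul_le_mul_of_nonneg_right (mu_q_antitone A hj) (sq_nonneg _)
    _ = mu A (q A j) * ∑ t, (evec A (q A t) ⬝ᵥ y) ^ 2 := (Finset.mul_sum _ _ _).symm
    _ = mu A (q A j) * ∑ r, (evec A r ⬝ᵥ y) ^ 2 := by
        rw [Equiv.sum_comp (q A) (fun r => (evec A r ⬝ᵥ y) ^ 2)]
    _ ≤ mu A (q A j) * ∑ r, (evec A r ⬝ᵥ x) ^ 2 :=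
        mul_le_mul_of_nonneg_left (Finset.sum_le_sum fun r _ => hysq r) (mu_nonneg A _)
    _ = mu A (q A j) * (x ⬝ᵥ x) := by rw [← dot_self_eq]

lemma specNorm_nonneg (A : Matrix (Fin m) (Fin n) ℝ) : 0 ≤ specNorm A := by
  rw [specNorm_eq_norm]; exact norm_nonneg _

lemma evec_linearIndependent : LinearIndependent ℝ (evec A) := by
  rw [linearIndependent_iff']
  intro s g hg i hi
  have h := congrArg (fun v => evec A i ⬝ᵥ v) hg
  simp only [dotProduct_zero] at h
  rw [dotProduct_finsum] at h
  have h2 : ∀ t ∈ s, evec A i ⬝ᵥ (g t • evec A t) = if i = t then g t else 0 := by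
    intro t _
    rw [dotProduct_smul, smul_eq_mul, evec_orth]
    split <;> simp
  rw [Finset.sum_congr rfl h2, Finset.sum_ite_eq s i g, if_pos hi] at h
  exact h

lemma dotProduct_self_pos {p : ℕ} {x : Fin p → ℝ} (hx : x ≠ 0) : 0 < x ⬝ᵥ x := by
  have h0 : 0 ≤ x ⬝ᵥ x := Finset.sum_nonneg fun i _ => mul_self_nonneg _
  rcases h0.lt_or_eq with h | h
  · exact h
  · exact absurd (dotProduct_self_eq_zero.mp h.symm) hx

lemma sqrt_mu_le_sval (j : Fin n) : Real.sqrt (mu A (q A j)) ≤ sval A (j.val + 1) := by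
  classical
  refine le_csInf ⟨specNorm (A - 0), ⟨0, by rw [rank_zero]; omega, rfl⟩⟩ ?_
  rintro b ⟨C, hC, rfl⟩
  set f : Fin (j.val + 1) → (Fin n → ℝ) := fun i => evec A (q A (Fin.castLE j.isLt i)) with hf
  have hLI : LinearIndependent ℝ f :=
    (evec_linearIndependent A).comp _ ((q A).injective.comp (Fin.castLE_injective _))
  set W : Submodule ℝ (Fin n → ℝ) := Submodule.span ℝ (Set.range f) with hWdef
  set K : Submodule ℝ (Fin n → ℝ) := LinearMap.ker C.mulVecLin with hKdef
  have hWrank : Module.finrank ℝ W = j.val + 1 := by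
    rw [finrank_span_eq_card hLI]; simp
  have hpin : Module.finrank ℝ (Fin n → ℝ) = n := by simp
  have hKrank : n ≤ Module.finrank ℝ K + j.val := by
    have h5 := LinearMap.finrank_range_add_finrank_ker C.mulVecLin
    rw [hpin] at h5
    have h6 : C.rank ≤ j.val := Nat.lt_succ_iff.mp hC
    have h7 : C.rank = Module.finrank ℝ (LinearMap.range C.mulVecLin) := rfl
    have h8 : Module.finrank ℝ K = Module.finrank ℝ (LinearMap.ker C.mulVecLin) := rfl
    omega
  have hne : W ⊓ K ≠ ⊥ := by
    intro hbot
    have hsum := Submodule.finrank_sup_add_finrank_inf_eq W K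
    have hle : Module.finrank ℝ ↥(W ⊔ K) ≤ n := le_trans (Submodule.finrank_le _) (le_of_eq hpin)
    rw [hbot, finrank_bot] at hsum
    omega
  obtain ⟨x, hx, hx0⟩ := Submodule.exists_mem_ne_zero_of_ne_bot hne
  rw [Submodule.mem_inf] at hx
  obtain ⟨a, ha⟩ := (Submodule.mem_span_range_iff_exists_fun ℝ).mp hx.1
  have hcoef : ∀ t : Fin n, (j : ℕ) < (t : ℕ) → evec A (q A t) ⬝ᵥ x = 0 := by
    intro t ht
    rw [← ha, dotProduct_finsum]
    apply Finset.sum_eq_zero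
    intro i _
    rw [dotProduct_smul, smul_eq_mul, evec_orth, if_neg, mul_zero]
    intro hqq
    have h7 := congrArg Fin.val ((q A).injective hqq)
    simp only [Fin.coe_castLE] at h7
    have := i.isLt
    omega
  have hCx : C *ᵥ x = 0 := hx.2
  have hACx : (A - C) *ᵥ x = A *ᵥ x := by rw [sub_mulVec, hCx, sub_zero]
  have hxx : 0 < x ⬝ᵥ x := dotProduct_self_pos hx0
  have key : mu A (q A j) * (x ⬝ᵥ x) ≤ (A *ᵥ x) ⬝ᵥ (A *ᵥ x) := by
    rw [dot_H_eq A x, dot_self_eq A x,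
      ← Equiv.sum_comp (q A) (fun r => mu A r * (evec A r ⬝ᵥ x) ^ 2),
      ← Equiv.sum_comp (q A) (fun r => (evec A r ⬝ᵥ x) ^ 2), Finset.mul_sum]
    apply Finset.sum_le_sum
    intro t _
    by_cases ht : (t : ℕ) ≤ (j : ℕ)
    · exact mul_le_mul_of_nonneg_right (mu_q_antitone A (by rw [Fin.le_def]; omega)) (sq_nonneg _)
    · rw [hcoef t (by omega)]
      simp
  have hnorm := dot_mulVec_le (A - C) x
  rw [hACx] at hnorm
  have h2 : mu A (q A j) ≤ specNorm (A - C) ^ 2 :=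
    le_of_mul_le_mul_right (le_trans key hnorm) hxx
  calc Real.sqrt (mu A (q A j)) ≤ Real.sqrt (specNorm (A - C) ^ 2) := Real.sqrt_le_sqrt h2
    _ = specNorm (A - C) := Real.sqrt_sq (specNorm_nonneg _)

lemma sval_eq_sqrt_mu (j : Fin n) : sval A (j.val + 1) = Real.sqrt (mu A (q A j)) :=
  le_antisymm (sval_le_sqrt_mu A j) (sqrt_mu_le_sval A j)

lemma prod_sqrt (p : ℕ) (f : Fin p → ℝ) (hf : ∀ i, 0 ≤ f i) :
    ∏ i, Real.sqrt (f i) = Real.sqrt (∏ i, f i) := by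
  have h2 : (∏ i, Real.sqrt (f i)) ^ 2 = ∏ i, f i := by
    rw [← Finset.prod_pow]
    exact Finset.prod_congr rfl fun i _ => Real.sq_sqrt (hf i)
  rw [← h2, Real.sqrt_sq (Finset.prod_nonneg fun i _ => Real.sqrt_nonneg _)]

lemma det_eq_prod_mu : (Aᵀ * A).det = ∏ i, mu A i := by
  simpa [mu] using (hermAtA A).det_eq_prod_eigenvalues

lemma vol_eq_sqrt_det (h : n ≤ m) : vol A = Real.sqrt ((Aᵀ * A).det) := by
  have hmin : min (Fintype.card (Fin m)) (Fintype.card (Fin n)) = n := by simp [h]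
  rw [vol, hmin]
  have h1 : ∏ j ∈ Finset.Icc 1 n, sval A j = ∏ i : Fin n, sval A (i.val + 1) := by
    rw [Fin.prod_univ_eq_prod_range (fun i => sval A (i + 1))]
    apply Finset.prod_nbij' (fun j => j - 1) (fun i => i + 1) <;> intros <;>
      simp_all [Finset.mem_Icc, Finset.mem_range] <;> omega
  rw [h1]
  calc ∏ i : Fin n, sval A (i.val + 1)
      = ∏ i : Fin n, Real.sqrt (mu A (q A i)) :=
        Finset.prod_congr rfl fun i _ => sval_eq_sqrt_mu A i
    _ = ∏ i : Fin n, Real.sqrt (mu A i) := Equiv.prod_comp (q A) (fun r => Real.sqrt (mu A r))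
    _ = Real.sqrt (∏ i, mu A i) := prod_sqrt n (mu A) (mu_nonneg A)
    _ = Real.sqrt ((Aᵀ * A).det) := by rw [det_eq_prod_mu]

lemma vol_nonneg (A : Matrix (Fin m) (Fin n) ℝ) : 0 ≤ vol A :=
  Finset.prod_nonneg fun j _ => sval_nonneg A j

lemma psd_det_nonneg {p : ℕ} {M : Matrix (Fin p) (Fin p) ℝ} (hM : M.PosSemidef) :
    0 ≤ M.det := by
  have h := hM.isHermitian.det_eq_prod_eigenvalues
  simp only [RCLike.ofReal_real_eq_id, id] at h
  rw [h]
  exact Finset.prod_nonneg fun i _ => hM.eigenvalues_nonneg i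

lemma vol_sq (h : n ≤ m) : vol A ^ 2 = (Aᵀ * A).det := by
  rw [vol_eq_sqrt_det A h, Real.sq_sqrt (psd_det_nonneg (psdAtA A))]

lemma vol_square {p : ℕ} (M : Matrix (Fin p) (Fin p) ℝ) : vol M = |M.det| := by
  rw [vol_eq_sqrt_det M le_rfl, det_mul, det_transpose, ← sq, Real.sqrt_sq_eq_abs]

lemma psd_add {p : ℕ} {M N : Matrix (Fin p) (Fin p) ℝ} (hM : M.PosSemidef)
    (hN : N.PosSemidef) : (M + N).PosSemidef :=
  hM.add hN

lemma one_le_det_one_add {p : ℕ} {M : Matrix (Fin p) (Fin p) ℝ} (hM : M.PosSemidef) :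
    1 ≤ (1 + M).det := by
  have h1 : (1 + M : Matrix (Fin p) (Fin p) ℝ).IsHermitian := by
    rw [IsHermitian, conjTranspose_add, conjTranspose_one, hM.isHermitian.eq]
  have heig : ∀ i, 1 ≤ h1.eigenvalues i := by
    intro i
    set w : Fin p → ℝ := ⇑(h1.eigenvectorBasis i) with hw
    have hw0 : w ≠ 0 := by
      intro hcon
      apply h1.eigenvectorBasis.orthonormal.ne_zero i
      ext r
      exact congrFun hcon r
    have hvec : (1 + M) *ᵥ w = h1.eigenvalues i • w := h1.mulVec_eigenvectorBasis i
    have hMw : M *ᵥ w = (h1.eigenvalues i - 1) • w := by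
      rw [add_mulVec, one_mulVec] at hvec
      rw [sub_smul, one_smul, ← hvec]
      abel
    have hpos := hM.dotProduct_mulVec_nonneg w
    rw [hMw, star_trivial, dotProduct_smul, smul_eq_mul] at hpos
    have hww : 0 < w ⬝ᵥ w := dotProduct_self_pos hw0
    nlinarith
  have hdet : (1 + M).det = ∏ i, h1.eigenvalues i := by
    simpa using h1.det_eq_prod_eigenvalues
  rw [hdet]
  calc (1:ℝ) = ∏ _i : Fin p, 1 := by simp
    _ ≤ ∏ i, h1.eigenvalues i :=
        Finset.prod_le_prod (fun i _ => zero_le_one) (fun i _ => heig i)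

open scoped MatrixOrder in
lemma det_le_det_add {p : ℕ} {M N : Matrix (Fin p) (Fin p) ℝ} (hM : M.PosSemidef)
    (hN : N.PosSemidef) : M.det ≤ (M + N).det := by
  rcases eq_or_ne M.det 0 with h0 | h0
  · rw [h0]; exact psd_det_nonneg (psd_add hM hN)
  · set S := CFC.sqrt M with hSdef
    have hS : S.PosSemidef := by open scoped MatrixOrder in exact (CFC.sqrt_nonneg M).posSemidef
    have hSS : S * S = M := by open scoped MatrixOrder in exact CFC.sqrt_mul_sqrt_self M hM.nonneg
    have hdetS : S.det * S.det = M.det := by rw [← det_mul, hSS]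
    have hSdetu : IsUnit S.det :=
      isUnit_iff_ne_zero.mpr (fun h => h0 (by rw [← hdetS, h, zero_mul]))
    set Q := S⁻¹ * N * S⁻¹ with hQdef
    have hQpsd : Q.PosSemidef := by
      have h1 : (S⁻¹)ᴴ = S⁻¹ := by rw [conjTranspose_nonsing_inv, hS.isHermitian.eq]
      have h2 := hN.conjTranspose_mul_mul_same (B := S⁻¹)
      rwa [h1] at h2
    have hfact : M + N = S * (1 + Q) * S := by
      rw [mul_add, add_mul, mul_one, hSS, hQdef]
      congr 1
      symm
      calc S * (S⁻¹ * N * S⁻¹) * S = (S * S⁻¹) * N * (S⁻¹ * S) := by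
            simp only [Matrix.mul_assoc]
        _ = N := by rw [mul_nonsing_inv _ hSdetu, nonsing_inv_mul _ hSdetu, one_mul, mul_one]
    rw [hfact, det_mul, det_mul]
    have h1M := one_le_det_one_add hQpsd
    nlinarith [psd_det_nonneg hM]

lemma det_sq_le {p k : ℕ} (X Y : Matrix (Fin p) (Fin k) ℝ) :
    (Xᵀ * Y).det ^ 2 ≤ (Xᵀ * X).det * (Yᵀ * Y).det := by
  rcases eq_or_ne (Xᵀ * X).det 0 with h0 | h0
  · obtain ⟨v, hv0, hv⟩ := (exists_mulVec_eq_zero_iff (M := Xᵀ * X)).mpr h0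
    have hXv : X *ᵥ v = 0 := by
      have h1 : (X *ᵥ v) ⬝ᵥ (X *ᵥ v) = 0 := by rw [dot_AtA, hv, dotProduct_zero]
      exact dotProduct_self_eq_zero.mp h1
    have hYX : (Yᵀ * X) *ᵥ v = 0 := by rw [← mulVec_mulVec, hXv, mulVec_zero]
    have hdYX : (Yᵀ * X).det = 0 := exists_mulVec_eq_zero_iff.mp ⟨v, hv0, hYX⟩
    have hXY : (Xᵀ * Y).det = 0 := by
      rw [← det_transpose, transpose_mul, transpose_transpose, hdYX]
    rw [hXY, h0]
    norm_num
  · have hG : (Xᵀ * X).PosSemidef := psdAtA X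
    have hGdetu : IsUnit (Xᵀ * X).det := isUnit_iff_ne_zero.mpr h0
    have hGdetpos : 0 < (Xᵀ * X).det := (psd_det_nonneg hG).lt_of_ne (Ne.symm h0)
    set G := Xᵀ * X with hGdef
    have hGinv : G * G⁻¹ = 1 := mul_nonsing_inv _ hGdetu
    have hGt : Gᵀ = G := by rw [hGdef, transpose_mul, transpose_transpose]
    set P := X * G⁻¹ * Xᵀ with hP
    have hPsymm : Pᵀ = P := by
      rw [hP, transpose_mul, transpose_mul, transpose_transpose, transpose_nonsing_inv, hGt]
      simp only [Matrix.mul_assoc]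
    have hPP : P * P = P := by
      calc P * P = X * G⁻¹ * ((Xᵀ * X) * (G⁻¹ * Xᵀ)) := by
            rw [hP]; simp only [Matrix.mul_assoc]
        _ = X * G⁻¹ * ((G * G⁻¹) * Xᵀ) := by rw [← hGdef]; simp only [Matrix.mul_assoc]
        _ = P := by rw [hGinv, Matrix.one_mul, hP]
    have hM1 : Yᵀ * P * Y = (P * Y)ᵀ * (P * Y) := by
      calc Yᵀ * P * Y = Yᵀ * (P * P) * Y := by rw [hPP]
        _ = (Yᵀ * P) * (P * Y) := by simp only [Matrix.mul_assoc]
        _ = (P * Y)ᵀ * (P * Y) := by rw [transpose_mul, hPsymm]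
    have hM2 : Yᵀ * (1 - P) * Y = ((1 - P) * Y)ᵀ * ((1 - P) * Y) := by
      have hNN : (1 - P) * (1 - P) = 1 - P := by
        rw [sub_mul, one_mul, mul_sub, mul_one, hPP]
        abel
      have hNt : (1 - P)ᵀ = 1 - P := by rw [transpose_sub, transpose_one, hPsymm]
      calc Yᵀ * (1 - P) * Y = Yᵀ * ((1 - P) * (1 - P)) * Y := by rw [hNN]
        _ = (Yᵀ * (1 - P)) * ((1 - P) * Y) := by simp only [Matrix.mul_assoc]
        _ = ((1 - P) * Y)ᵀ * ((1 - P) * Y) := by rw [transpose_mul, hNt]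
    have hM1psd : (Yᵀ * P * Y).PosSemidef := by rw [hM1]; exact psdAtA (P * Y)
    have hM2psd : (Yᵀ * (1 - P) * Y).PosSemidef := by rw [hM2]; exact psdAtA ((1 - P) * Y)
    have hsplit : Yᵀ * P * Y + Yᵀ * (1 - P) * Y = Yᵀ * Y := by
      rw [Matrix.mul_sub, Matrix.mul_one, Matrix.sub_mul]
      abel
    have hle := det_le_det_add hM1psd hM2psd
    rw [hsplit] at hle
    have hdetM1 : (Yᵀ * P * Y).det = (Xᵀ * Y).det ^ 2 * G.det⁻¹ := by
      have hassoc : Yᵀ * P * Y = (Yᵀ * X) * G⁻¹ * (Xᵀ * Y) := by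
        rw [hP]; simp only [Matrix.mul_assoc]
      rw [hassoc, det_mul, det_mul, det_nonsing_inv]
      have hYX : (Yᵀ * X).det = (Xᵀ * Y).det := by
        rw [← det_transpose (Yᵀ * X), transpose_mul, transpose_transpose]
      rw [hYX, Ring.inverse_eq_inv]
      ring
    rw [hdetM1] at hle
    have h9 := mul_le_mul_of_nonneg_right hle hGdetpos.le
    rw [mul_assoc, inv_mul_cancel₀ h0, mul_one] at h9
    calc (Xᵀ * Y).det ^ 2 ≤ (Yᵀ * Y).det * G.det := h9
      _ = (Xᵀ * X).det * (Yᵀ * Y).det := by rw [mul_comm, hGdef]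

end EY

set_option maxHeartbeats 1000000 in
theorem statement_7 {m n k : ℕ}
    (A : Matrix (Fin m) (Fin n) ℝ) (J : Fin k → Fin n)
    (hJ : Function.Injective J)
    (hrank : (A.submatrix id J).rank = k)
    (hpos : 0 < vol (A.submatrix id J))
    (hmax : ∀ J' : Fin k → Fin n, DiffOne J J' →
      vol (A.submatrix id J') ≤ vol (A.submatrix id J)) :
    ∀ J₁ J₂ : Fin k → Fin n, DiffOne J J₁ → DiffOne J J₂ →
      vol ((A.submatrix id J₁)ᵀ * (A.submatrix id J₂)) ≤
        vol ((A.submatrix id J)ᵀ * (A.submatrix id J)) := by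
  intro J₁ J₂ h₁ h₂
  classical
  set B := A.submatrix id J with hB
  set B₁ := A.submatrix id J₁ with hB₁
  set B₂ := A.submatrix id J₂ with hB₂
  have hkm : k ≤ m := by
    have h := Matrix.rank_le_card_height B
    simp only [Fintype.card_fin] at h
    omega
  have h01 : 0 ≤ vol B₁ := EY.vol_nonneg _
  have h02 : 0 ≤ vol B₂ := EY.vol_nonneg _
  have h0 : 0 ≤ vol B := EY.vol_nonneg _
  have hv1 : vol B₁ ≤ vol B := hmax J₁ h₁
  have hv2 : vol B₂ ≤ vol B := hmax J₂ h₂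
  have e1 : vol (B₁ᵀ * B₂) = |(B₁ᵀ * B₂).det| := EY.vol_square _
  have e2 : vol (Bᵀ * B) = (Bᵀ * B).det := by
    rw [EY.vol_square, abs_of_nonneg (EY.psd_det_nonneg (EY.psdAtA B))]
  have e3 : vol B₁ ^ 2 = (B₁ᵀ * B₁).det := EY.vol_sq B₁ hkm
  have e4 : vol B₂ ^ 2 = (B₂ᵀ * B₂).det := EY.vol_sq B₂ hkm
  have e5 : vol B ^ 2 = (Bᵀ * B).det := EY.vol_sq B hkm
  have ha2 : vol (B₁ᵀ * B₂) ^ 2 ≤ vol (Bᵀ * B) ^ 2 := by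
    calc vol (B₁ᵀ * B₂) ^ 2 = (B₁ᵀ * B₂).det ^ 2 := by rw [e1, sq_abs]
      _ ≤ (B₁ᵀ * B₁).det * (B₂ᵀ * B₂).det := EY.det_sq_le B₁ B₂
      _ = vol B₁ ^ 2 * vol B₂ ^ 2 := by rw [e3, e4]
      _ ≤ vol B ^ 2 * vol B ^ 2 := by
          have p1 : vol B₁ ^ 2 ≤ vol B ^ 2 := pow_le_pow_left₀ h01 hv1 2
          have p2 : vol B₂ ^ 2 ≤ vol B ^ 2 := pow_le_pow_left₀ h02 hv2 2
          exact mul_le_mul p1 p2 (sq_nonneg (vol B₂)) (sq_nonneg (vol B))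
      _ = vol (Bᵀ * B) ^ 2 := by rw [e2, ← e5]; ring
  exact le_of_pow_le_pow_left₀ two_ne_zero (EY.vol_nonneg _) ha2
end

section
/- Let A ∈ ℝ^{m×n} with k < min(m,n) be partitioned in blocks A = [[A11, A12],[A21, A22]] with A11 ∈ ℝ^{k×k} invertible, and let S(A11) = A22 − A21·A11⁻¹·A12. Suppose A11 = L·D·U where L is unit lower triangular, D is invertible diagonal, U is unit upper triangular, and that: (i) ‖L‖_max ≤ 1 and ‖U‖_max ≤ 1; (ii) ‖D⁻¹L⁻¹A12‖_max ≤ 1; (iii) ‖A21U⁻¹D⁻¹‖_max ≤ 1; (iv) ‖S(A11)‖_max ≤ ρ·min_i |D_{ii}| for some ρ ≥ 1. (These conditions hold when A11 is the k×k pivot block selected by k steps of Gaussian elimination with complete pivoting, with ρ the associated growth factor.) Then for every 1 ≤ j ≤ k: σ_j(A) ≤ 4^{k+1}·(k + ρ)·√((m−k)(n−k))·σ_j(A11); in particular vol(A11) ≥ (4^{k+1}(k+ρ)√((m−k)(n−k)))^{−k}·∏_{j=1}^k σ_j(A). -/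
open Matrix

/-! ### Auxiliary lemmas -/

open scoped Matrix.Norms.L2Operator

section Aux

lemma euc_norm_eq {p : Type*} [Fintype p] (y : EuclideanSpace ℝ p) :
    ‖y‖ = Real.sqrt (∑ i, (y i)^2) := by
  rw [EuclideanSpace.norm_eq]
  congr 1
  exact Finset.sum_congr rfl fun i _ => by rw [Real.norm_eq_abs, sq_abs]

lemma specNorm_le_of_sq_sum_le {m n : Type*} [Fintype m] [Fintype n] [DecidableEq n]
    (A : Matrix m n ℝ) {c : ℝ} (hc : 0 ≤ c) (h : ∑ i, ∑ j, (A i j)^2 ≤ c^2) : ‖A‖ ≤ c := by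
  rw [Matrix.l2_opNorm_def]
  refine ContinuousLinearMap.opNorm_le_bound _ hc fun x => ?_
  have happ : ∀ i, (Matrix.toEuclideanLin A x : EuclideanSpace ℝ m) i = ∑ j, A i j * x j :=
    fun i => rfl
  have h1 : ‖(LinearEquiv.trans Matrix.toEuclideanLin LinearMap.toContinuousLinearMap) A x‖
      = Real.sqrt (∑ i, (∑ j, A i j * x j)^2) := by
    refine (euc_norm_eq (Matrix.toEuclideanLin A x)).trans ?_
    exact congrArg _ (Finset.sum_congr rfl fun i _ => by rw [happ])
  rw [h1, euc_norm_eq x]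
  have h2 : ∑ i, (∑ j, A i j * x j)^2 ≤ (∑ i, ∑ j, (A i j)^2) * (∑ j, (x j)^2) := by
    rw [Finset.sum_mul]
    exact Finset.sum_le_sum fun i _ => Finset.sum_mul_sq_le_sq_mul_sq _ _ _
  calc Real.sqrt (∑ i, (∑ j, A i j * x j)^2)
      ≤ Real.sqrt ((∑ i, ∑ j, (A i j)^2) * (∑ j, (x j)^2)) := Real.sqrt_le_sqrt h2
    _ ≤ Real.sqrt (c^2 * (∑ j, (x j)^2)) := by
        apply Real.sqrt_le_sqrt
        exact mul_le_mul_of_nonneg_right h (Finset.sum_nonneg fun j _ => sq_nonneg _)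
    _ = c * Real.sqrt (∑ j, (x j)^2) := by
        rw [Real.sqrt_mul (sq_nonneg c), Real.sqrt_sq hc]

lemma specNorm_diagonal_le {n : Type*} [Fintype n] [DecidableEq n] (v : n → ℝ) {c : ℝ}
    (hc : 0 ≤ c) (h : ∀ i, |v i| ≤ c) : ‖Matrix.diagonal v‖ ≤ c := by
  rw [Matrix.l2_opNorm_def]
  refine ContinuousLinearMap.opNorm_le_bound _ hc fun x => ?_
  have happ : ∀ i, (Matrix.toEuclideanLin (Matrix.diagonal v) x : EuclideanSpace ℝ n) i
      = v i * x i := by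
    intro i
    show (Matrix.diagonal v).mulVec (fun j => x j) i = v i * x i
    rw [Matrix.mulVec_diagonal]
  have h1 : ‖(LinearEquiv.trans Matrix.toEuclideanLin LinearMap.toContinuousLinearMap)
      (Matrix.diagonal v) x‖ = Real.sqrt (∑ i, (v i * x i)^2) := by
    refine (euc_norm_eq (Matrix.toEuclideanLin (Matrix.diagonal v) x)).trans ?_
    exact congrArg _ (Finset.sum_congr rfl fun i _ => by rw [happ])
  rw [h1, euc_norm_eq x]
  rw [← Real.sqrt_sq hc, ← Real.sqrt_mul (sq_nonneg c)]
  apply Real.sqrt_le_sqrt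
  rw [Finset.mul_sum]
  refine Finset.sum_le_sum fun i _ => ?_
  have := h i
  have h2 : (v i)^2 ≤ c^2 := by nlinarith [abs_nonneg (v i), sq_abs (v i)]
  nlinarith [sq_nonneg (x i)]

section svalLemmas
variable {m n : Type*} [Fintype m] [Fintype n] [DecidableEq n]

lemma specNorm_eq_norm (A : Matrix m n ℝ) : specNorm A = ‖A‖ := rfl

lemma svalSet_nonempty (A : Matrix m n ℝ) {j : ℕ} (hj : 1 ≤ j) :
    {x : ℝ | ∃ B : Matrix m n ℝ, B.rank < j ∧ x = specNorm (A - B)}.Nonempty :=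
  ⟨specNorm (A - 0), 0, by rw [Matrix.rank_zero]; omega, rfl⟩

lemma svalSet_bddBelow (A : Matrix m n ℝ) (j : ℕ) :
    BddBelow {x : ℝ | ∃ B : Matrix m n ℝ, B.rank < j ∧ x = specNorm (A - B)} :=
  ⟨0, fun _ ⟨_, _, hx⟩ => hx ▸ norm_nonneg _⟩

lemma sval_nonneg (A : Matrix m n ℝ) {j : ℕ} (hj : 1 ≤ j) : 0 ≤ sval A j :=
  le_csInf (svalSet_nonempty A hj) fun _ ⟨_, _, hx⟩ => hx ▸ norm_nonneg _

lemma sval_le_of_rank_lt (A B : Matrix m n ℝ) {j : ℕ} (hB : B.rank < j) :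
    sval A j ≤ ‖A - B‖ :=
  csInf_le (svalSet_bddBelow A j) ⟨B, hB, rfl⟩

lemma sval_exists_lt (A : Matrix m n ℝ) {j : ℕ} (hj : 1 ≤ j) {ε : ℝ} (hε : 0 < ε) :
    ∃ B : Matrix m n ℝ, B.rank < j ∧ ‖A - B‖ < sval A j + ε := by
  obtain ⟨x, ⟨B, hB, hx⟩, hlt⟩ := exists_lt_of_csInf_lt (svalSet_nonempty A hj)
    (show sval A j < sval A j + ε by linarith)
  exact ⟨B, hB, by rw [← specNorm_eq_norm, ← hx]; exact hlt⟩

lemma sval_add_le (M N : Matrix m n ℝ) {j : ℕ} (hj : 1 ≤ j) :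
    sval (M + N) j ≤ sval M j + ‖N‖ := by
  refine le_of_forall_pos_le_add fun ε hε => ?_
  obtain ⟨B, hB, hlt⟩ := sval_exists_lt M hj hε
  calc sval (M + N) j ≤ ‖M + N - B‖ := sval_le_of_rank_lt _ B hB
    _ ≤ ‖M - B‖ + ‖N‖ := by
        rw [show M + N - B = (M - B) + N from add_sub_right_comm M N B]
        exact norm_add_le _ _
    _ ≤ sval M j + ε + ‖N‖ := by linarith
    _ = sval M j + ‖N‖ + ε := by ring

lemma sval_mul_le {p q : Type*} [Fintype p] [Fintype q] [DecidableEq p] [DecidableEq q]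
    (X : Matrix m p ℝ) (M : Matrix p q ℝ) (Y : Matrix q n ℝ) {j : ℕ} (hj : 1 ≤ j) :
    sval (X * M * Y) j ≤ ‖X‖ * ‖Y‖ * sval M j := by
  refine le_of_forall_pos_le_add fun ε hε => ?_
  have hε' : 0 < ε / (‖X‖ * ‖Y‖ + 1) := by positivity
  obtain ⟨B, hB, hlt⟩ := sval_exists_lt M hj hε'
  have hrank : (X * B * Y).rank < j :=
    lt_of_le_of_lt ((Matrix.rank_mul_le_left (X * B) Y).trans
      (Matrix.rank_mul_le_right X B)) hB
  have key : sval (X * M * Y) j ≤ ‖X‖ * ‖M - B‖ * ‖Y‖ := by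
    calc sval (X * M * Y) j ≤ ‖X * M * Y - X * B * Y‖ := sval_le_of_rank_lt _ _ hrank
      _ = ‖X * (M - B) * Y‖ := by rw [Matrix.mul_sub X M B, Matrix.sub_mul]
      _ ≤ ‖X * (M - B)‖ * ‖Y‖ := Matrix.l2_opNorm_mul _ _
      _ ≤ ‖X‖ * ‖M - B‖ * ‖Y‖ :=
          mul_le_mul_of_nonneg_right (Matrix.l2_opNorm_mul _ _) (norm_nonneg _)
  have hXY : (0:ℝ) ≤ ‖X‖ * ‖Y‖ := by positivity
  have h2 : ‖X‖ * ‖M - B‖ * ‖Y‖ ≤ ‖X‖ * ‖Y‖ * (sval M j + ε / (‖X‖ * ‖Y‖ + 1)) := by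
    have := mul_le_mul_of_nonneg_left (le_of_lt hlt) hXY
    nlinarith [norm_nonneg X, norm_nonneg Y, norm_nonneg (M - B)]
  have h3 : ‖X‖ * ‖Y‖ * (ε / (‖X‖ * ‖Y‖ + 1)) ≤ ε := by
    rw [div_eq_inv_mul]
    rw [show ‖X‖ * ‖Y‖ * ((‖X‖ * ‖Y‖ + 1)⁻¹ * ε) = (‖X‖ * ‖Y‖) / (‖X‖ * ‖Y‖ + 1) * ε by ring]
    have : (‖X‖ * ‖Y‖) / (‖X‖ * ‖Y‖ + 1) ≤ 1 := by
      rw [div_le_one (by positivity)]; linarith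
    nlinarith
  calc sval (X * M * Y) j ≤ ‖X‖ * ‖M - B‖ * ‖Y‖ := key
    _ ≤ ‖X‖ * ‖Y‖ * sval M j + ‖X‖ * ‖Y‖ * (ε / (‖X‖ * ‖Y‖ + 1)) := by
        linarith [h2, mul_add (‖X‖*‖Y‖) (sval M j) (ε / (‖X‖ * ‖Y‖ + 1))]
    _ ≤ ‖X‖ * ‖Y‖ * sval M j + ε := by linarith

end svalLemmas

lemma norm_mulVec_le {m n : Type*} [Fintype m] [Fintype n] [DecidableEq n]
    (A : Matrix m n ℝ) (v : n → ℝ) :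
    ‖(WithLp.equiv 2 (m → ℝ)).symm (A *ᵥ v)‖ ≤ ‖A‖ * ‖(WithLp.equiv 2 (n → ℝ)).symm v‖ :=
  Matrix.l2_opNorm_mulVec A ((WithLp.equiv 2 (n → ℝ)).symm v)

lemma one_le_norm_inv_mul_sval {k : ℕ} (A : Matrix (Fin k) (Fin k) ℝ) (hA : IsUnit A.det)
    {j : ℕ} (hj : 1 ≤ j) (hjk : j ≤ k) : 1 ≤ ‖A⁻¹‖ * sval A j := by
  have key : ∀ B : Matrix (Fin k) (Fin k) ℝ, B.rank < j → 1 ≤ ‖A⁻¹‖ * ‖A - B‖ := by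
    intro B hB
    have hdet : B.det = 0 := by
      by_contra hd
      have : IsUnit B := (Matrix.isUnit_iff_isUnit_det B).mpr (isUnit_iff_ne_zero.mpr hd)
      have := Matrix.rank_of_isUnit B this
      rw [this] at hB
      simp only [Fintype.card_fin] at hB
      omega
    obtain ⟨v, hv0, hv⟩ := (Matrix.exists_mulVec_eq_zero_iff).mpr hdet
    set xv : EuclideanSpace ℝ (Fin k) := (WithLp.equiv 2 (Fin k → ℝ)).symm v with hxv
    have hxvnorm : 0 < ‖xv‖ := by
      rw [norm_pos_iff]
      simpa [hxv] using hv0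
    have h1 : (A - B) *ᵥ v = A *ᵥ v := by rw [Matrix.sub_mulVec, hv, sub_zero]
    have h2 : ‖xv‖ ≤ ‖A⁻¹‖ * ‖(WithLp.equiv 2 (Fin k → ℝ)).symm (A *ᵥ v)‖ := by
      have := norm_mulVec_le A⁻¹ (A *ᵥ v)
      have hc : A⁻¹ *ᵥ (A *ᵥ v) = v := by
        rw [Matrix.mulVec_mulVec, Matrix.nonsing_inv_mul A hA, Matrix.one_mulVec]
      rwa [hc] at this
    have h3 : ‖(WithLp.equiv 2 (Fin k → ℝ)).symm (A *ᵥ v)‖ ≤ ‖A - B‖ * ‖xv‖ := by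
      rw [← h1]
      exact norm_mulVec_le (A - B) v
    have := le_trans h2 (mul_le_mul_of_nonneg_left h3 (norm_nonneg _))
    rw [← mul_assoc] at this
    exact le_of_mul_le_mul_right (by linarith) hxvnorm
  have hk : 0 < k := lt_of_lt_of_le hj hjk
  have hApos : 0 < ‖A⁻¹‖ := by
    rw [norm_pos_iff]
    intro h0
    have : (A⁻¹ * A) = 0 := by rw [h0, Matrix.zero_mul]
    rw [Matrix.nonsing_inv_mul A hA] at this
    have : (1 : Matrix (Fin k) (Fin k) ℝ) ⟨0, hk⟩ ⟨0, hk⟩ = 0 := by rw [this]; rfl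
    simp at this
  have hsval : ‖A⁻¹‖⁻¹ ≤ sval A j := by
    refine le_csInf ⟨specNorm (A - 0), 0, by rw [Matrix.rank_zero]; omega, rfl⟩ ?_
    rintro x ⟨B, hB, rfl⟩
    rw [inv_le_iff_one_le_mul₀' hApos]
    exact key B hB
  calc (1:ℝ) = ‖A⁻¹‖ * ‖A⁻¹‖⁻¹ := by rw [mul_inv_cancel₀ (ne_of_gt hApos)]
    _ ≤ ‖A⁻¹‖ * sval A j := mul_le_mul_of_nonneg_left hsval (norm_nonneg _)

lemma lower_det_one {k : ℕ} (L : Matrix (Fin k) (Fin k) ℝ)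
    (hlow : ∀ i j : Fin k, i < j → L i j = 0)
    (hdiag : ∀ i, L i i = 1) : L.det = 1 := by
  have hbt : L.BlockTriangular OrderDual.toDual := by
    intro i j h
    exact hlow i j (by exact h)
  rw [Matrix.det_of_lowerTriangular L hbt]
  simp [hdiag]

lemma lower_inv_colsum {k : ℕ} (L : Matrix (Fin k) (Fin k) ℝ)
    (hlow : ∀ i j : Fin k, i < j → L i j = 0)
    (hdiag : ∀ i, L i i = 1)
    (hmax : ∀ i j, |L i j| ≤ 1)
    (j : Fin k) :
    ∑ l, |L⁻¹ l j| ≤ 2 ^ (k - 1 - (j : ℕ)) := by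
  have hdet : IsUnit L.det := by rw [lower_det_one L hlow hdiag]; exact isUnit_one
  have hinv : L * L⁻¹ = 1 := Matrix.mul_nonsing_inv L hdet
  set N := L⁻¹ with hN
  have hrec : ∀ i : Fin k, |N i j| ≤ (if i = j then (1:ℝ) else 0)
      + ∑ l ∈ Finset.univ.filter (fun l => l < i), |N l j| := by
    intro i
    have h0 : ∑ l, L i l * N l j = (1 : Matrix (Fin k) (Fin k) ℝ) i j := by
      rw [← Matrix.mul_apply, hinv]
    have hsplit : ∑ l, L i l * N l j
        = (∑ l ∈ Finset.univ.filter (fun l => l < i), L i l * N l j)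
          + ∑ l ∈ Finset.univ.filter (fun l => ¬ l < i), L i l * N l j :=
      (Finset.sum_filter_add_sum_filter_not _ _ _).symm
    have hlast : ∑ l ∈ Finset.univ.filter (fun l => ¬ l < i), L i l * N l j = N i j := by
      rw [Finset.sum_eq_single_of_mem i (by simp)]
      · rw [hdiag i, one_mul]
      · intro l hl hne
        simp only [Finset.mem_filter] at hl
        have : i < l := lt_of_le_of_ne (not_lt.mp hl.2) (Ne.symm hne)
        rw [hlow i l this, zero_mul]
    have heq : N i j = (1 : Matrix (Fin k) (Fin k) ℝ) i j
        - ∑ l ∈ Finset.univ.filter (fun l => l < i), L i l * N l j := by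
      rw [← h0, hsplit, hlast]; ring
    rw [heq]
    have h1 : (1 : Matrix (Fin k) (Fin k) ℝ) i j = if i = j then 1 else 0 :=
      Matrix.one_apply
    rw [h1]
    refine (abs_sub _ _).trans ?_
    gcongr
    · split <;> simp
    · refine (Finset.abs_sum_le_sum_abs _ _).trans ?_
      refine Finset.sum_le_sum fun l _ => ?_
      rw [abs_mul]
      exact mul_le_of_le_one_left (abs_nonneg _) (hmax i l)
  have hSnonneg : ∀ t : ℕ, (0:ℝ) ≤ ∑ l ∈ Finset.univ.filter (fun l : Fin k => (l:ℕ) ≤ t), |N l j| :=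
    fun t => Finset.sum_nonneg fun l _ => abs_nonneg _
  have hk : 0 < k := j.pos
  have hstep : ∀ t : ℕ, (∑ l ∈ Finset.univ.filter (fun l : Fin k => (l:ℕ) ≤ t), |N l j|)
      ≤ (if t < (j:ℕ) then 0 else 2^(t - (j:ℕ))) := by
    intro t
    induction t with
    | zero =>
      have hi0 : Finset.univ.filter (fun l : Fin k => (l:ℕ) ≤ 0) = {(⟨0, hk⟩ : Fin k)} := by
        ext l
        simp [Fin.ext_iff, Nat.le_zero]
      rw [hi0, Finset.sum_singleton]
      have hempty : Finset.univ.filter (fun l : Fin k => l < (⟨0, hk⟩ : Fin k)) = ∅ := by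
        ext l
        simp [Fin.lt_def]
      have := hrec ⟨0, hk⟩
      rw [hempty, Finset.sum_empty, add_zero] at this
      by_cases h0j : (0:ℕ) < (j:ℕ)
      · have hne : (⟨0, hk⟩ : Fin k) ≠ j :=
          Fin.ne_of_val_ne (show (0:ℕ) ≠ (j:ℕ) by omega)
        rw [if_pos h0j]
        rw [if_neg hne] at this
        exact this
      · have heq : (⟨0, hk⟩ : Fin k) = j :=
          Fin.ext (show (0:ℕ) = (j:ℕ) by omega)
        rw [if_neg h0j]
        rw [if_pos heq] at this
        simpa using this
    | succ t ih =>
      by_cases hlt : t + 1 < k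
      · set i : Fin k := ⟨t+1, hlt⟩ with hi
        have hins : Finset.univ.filter (fun l : Fin k => (l:ℕ) ≤ t + 1)
            = insert i (Finset.univ.filter (fun l : Fin k => (l:ℕ) ≤ t)) := by
          ext l
          simp only [Finset.mem_filter, Finset.mem_univ, true_and, Finset.mem_insert,
            Fin.ext_iff, hi]
          omega
        have hnm : i ∉ Finset.univ.filter (fun l : Fin k => (l:ℕ) ≤ t) := by
          simp [hi]
        rw [hins, Finset.sum_insert hnm]
        have hflt : Finset.univ.filter (fun l : Fin k => l < i)
            = Finset.univ.filter (fun l : Fin k => (l:ℕ) ≤ t) := by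
          ext l
          simp only [Finset.mem_filter, Finset.mem_univ, true_and, Fin.lt_def, hi]
          omega
        have hb := hrec i
        rw [hflt] at hb
        have hvi : (i:ℕ) = t + 1 := rfl
        by_cases h1 : t + 1 < (j:ℕ)
        · have htj : t < (j:ℕ) := by omega
          have hS0 : (∑ l ∈ Finset.univ.filter (fun l : Fin k => (l:ℕ) ≤ t), |N l j|) = 0 :=
            le_antisymm (by simpa [if_pos htj] using ih) (hSnonneg t)
          have hne : i ≠ j := Fin.ne_of_val_ne (by omega)
          rw [if_neg hne, hS0] at hb
          rw [if_pos h1, hS0]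
          simpa using hb
        · by_cases h2 : t + 1 = (j:ℕ)
          · have htj : t < (j:ℕ) := by omega
            have hS0 : (∑ l ∈ Finset.univ.filter (fun l : Fin k => (l:ℕ) ≤ t), |N l j|) = 0 :=
              le_antisymm (by simpa [if_pos htj] using ih) (hSnonneg t)
            have heq : i = j := Fin.ext (by omega)
            rw [if_pos heq, hS0, add_zero] at hb
            rw [if_neg h1, hS0, add_zero]
            simpa [h2] using hb
          · have htj : ¬ t < (j:ℕ) := by omega
            have hne : i ≠ j := Fin.ne_of_val_ne (by omega)
            rw [if_neg hne, zero_add] at hb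
            rw [if_neg htj] at ih
            rw [if_neg h1]
            have hexp : t + 1 - (j:ℕ) = (t - (j:ℕ)) + 1 := by omega
            rw [hexp, pow_succ]
            calc |N i j| + (∑ l ∈ Finset.univ.filter (fun l : Fin k => (l:ℕ) ≤ t), |N l j|)
                ≤ (∑ l ∈ Finset.univ.filter (fun l : Fin k => (l:ℕ) ≤ t), |N l j|)
                  + (∑ l ∈ Finset.univ.filter (fun l : Fin k => (l:ℕ) ≤ t), |N l j|) := by
                  linarith [hb]
              _ ≤ 2^(t - (j:ℕ)) + 2^(t - (j:ℕ)) := by linarith [ih]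
              _ = 2^(t - (j:ℕ)) * 2 := by ring
      · have hsame : Finset.univ.filter (fun l : Fin k => (l:ℕ) ≤ t + 1)
            = Finset.univ.filter (fun l : Fin k => (l:ℕ) ≤ t) := by
          ext l
          simp only [Finset.mem_filter, Finset.mem_univ, true_and]
          have := l.isLt
          omega
        rw [hsame]
        refine ih.trans ?_
        by_cases h1 : t < (j:ℕ)
        · rw [if_pos h1]
          split
          · exact le_refl _
          · positivity
        · rw [if_neg h1, if_neg (by omega : ¬ t + 1 < (j:ℕ))]
          exact pow_le_pow_right₀ one_le_two (by omega)
  have huniv : Finset.univ.filter (fun l : Fin k => (l:ℕ) ≤ k - 1) = Finset.univ := by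
    ext l
    simp only [Finset.mem_filter, Finset.mem_univ, true_and, iff_true]
    have := l.isLt
    omega
  have := hstep (k - 1)
  rw [huniv, if_neg (by have := j.isLt; omega : ¬ k - 1 < (j:ℕ))] at this
  exact this

lemma upper_inv_rowsum {k : ℕ} (U : Matrix (Fin k) (Fin k) ℝ)
    (hup : ∀ i j : Fin k, j < i → U i j = 0)
    (hdiag : ∀ i, U i i = 1)
    (hmax : ∀ i j, |U i j| ≤ 1)
    (i : Fin k) :
    ∑ l, |U⁻¹ i l| ≤ 2 ^ (k - 1 - (i : ℕ)) := by
  have h := lower_inv_colsum Uᵀ (fun a b hab => hup b a hab) hdiag (fun a b => hmax b a) i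
  have he : ∀ l, (Uᵀ)⁻¹ l i = U⁻¹ i l := by
    intro l
    rw [← Matrix.transpose_nonsing_inv]
    rfl
  calc ∑ l, |U⁻¹ i l| = ∑ l, |(Uᵀ)⁻¹ l i| := by
        exact Finset.sum_congr rfl fun l _ => by rw [he l]
    _ ≤ 2 ^ (k - 1 - (i : ℕ)) := h

lemma sum_sq_le_sq_sum_abs {ι : Type*} [Fintype ι] (a : ι → ℝ) :
    ∑ l, (a l)^2 ≤ (∑ l, |a l|)^2 := by
  have h : ∀ l : ι, (a l)^2 ≤ |a l| * ∑ t, |a t| := by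
    intro l
    rw [← sq_abs]
    have : |a l| ≤ ∑ t, |a t| := Finset.single_le_sum (fun t _ => abs_nonneg (a t))
      (Finset.mem_univ l)
    nlinarith [abs_nonneg (a l)]
  calc ∑ l, (a l)^2 ≤ ∑ l, |a l| * ∑ t, |a t| := Finset.sum_le_sum fun l _ => h l
    _ = (∑ l, |a l|)^2 := by rw [← Finset.sum_mul]; ring

lemma geom_bound (k : ℕ) : ∑ j : Fin k, (4:ℝ) ^ (k - 1 - (j:ℕ)) ≤ 4^k / 3 := by
  have h1 : ∑ j : Fin k, (4:ℝ) ^ (k - 1 - (j:ℕ))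
      = ∑ r ∈ Finset.range k, (4:ℝ) ^ (k - 1 - r) :=
    Fin.sum_univ_eq_sum_range (fun r => (4:ℝ)^(k - 1 - r)) k
  rw [h1, Finset.sum_range_reflect (fun r => (4:ℝ)^r) k]
  have h2 : ∑ r ∈ Finset.range k, (4:ℝ)^r = ((4:ℝ)^k - 1)/(4 - 1) :=
    geom_sum_eq (by norm_num) k
  rw [h2]
  have : (0:ℝ) < 4^k := by positivity
  norm_num
  linarith

lemma two_pow_sq (a : ℕ) : ((2:ℝ)^a)^2 = 4^a := by
  rw [show (4:ℝ) = 2^2 by norm_num, ← pow_mul, ← pow_mul, Nat.mul_comm]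

lemma specNorm_lower_inv_le {k : ℕ} (L : Matrix (Fin k) (Fin k) ℝ)
    (hlow : ∀ i j : Fin k, i < j → L i j = 0)
    (hdiag : ∀ i, L i i = 1)
    (hmax : ∀ i j, |L i j| ≤ 1) :
    ‖L⁻¹‖ ≤ 2^k / Real.sqrt 3 := by
  refine specNorm_le_of_sq_sum_le _ (by positivity) ?_
  have hc : ((2:ℝ)^k / Real.sqrt 3)^2 = 4^k / 3 := by
    rw [div_pow, Real.sq_sqrt (by norm_num : (0:ℝ) ≤ 3)]
    rw [two_pow_sq]
  rw [hc]
  calc ∑ i, ∑ j, ((L⁻¹) i j)^2 = ∑ j, ∑ i, ((L⁻¹) i j)^2 := Finset.sum_comm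
    _ ≤ ∑ j : Fin k, ((2:ℝ) ^ (k - 1 - (j:ℕ)))^2 := by
        refine Finset.sum_le_sum fun j _ => ?_
        refine (sum_sq_le_sq_sum_abs _).trans ?_
        have h := lower_inv_colsum L hlow hdiag hmax j
        have hn : (0:ℝ) ≤ ∑ l, |(L⁻¹) l j| := Finset.sum_nonneg fun l _ => abs_nonneg _
        nlinarith
    _ ≤ 4^k / 3 := by
        refine le_trans (le_of_eq ?_) (geom_bound k)
        exact Finset.sum_congr rfl fun j _ => two_pow_sq _

lemma specNorm_upper_inv_le {k : ℕ} (U : Matrix (Fin k) (Fin k) ℝ)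
    (hup : ∀ i j : Fin k, j < i → U i j = 0)
    (hdiag : ∀ i, U i i = 1)
    (hmax : ∀ i j, |U i j| ≤ 1) :
    ‖U⁻¹‖ ≤ 2^k / Real.sqrt 3 := by
  refine specNorm_le_of_sq_sum_le _ (by positivity) ?_
  have hc : ((2:ℝ)^k / Real.sqrt 3)^2 = 4^k / 3 := by
    rw [div_pow, Real.sq_sqrt (by norm_num : (0:ℝ) ≤ 3)]
    rw [two_pow_sq]
  rw [hc]
  calc ∑ i, ∑ j, ((U⁻¹) i j)^2
      ≤ ∑ i : Fin k, ((2:ℝ) ^ (k - 1 - (i:ℕ)))^2 := by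
        refine Finset.sum_le_sum fun i _ => ?_
        refine (sum_sq_le_sq_sum_abs _).trans ?_
        have h := upper_inv_rowsum U hup hdiag hmax i
        have hn : (0:ℝ) ≤ ∑ l, |(U⁻¹) i l| := Finset.sum_nonneg fun l _ => abs_nonneg _
        nlinarith
    _ ≤ 4^k / 3 := by
        refine le_trans (le_of_eq ?_) (geom_bound k)
        exact Finset.sum_congr rfl fun i _ => two_pow_sq _

end Aux

set_option maxHeartbeats 1600000 in
theorem statement_8 {k m' n' : ℕ} (hm : 1 ≤ m') (hn : 1 ≤ n')
    (A11 : Matrix (Fin k) (Fin k) ℝ) (A12 : Matrix (Fin k) (Fin n') ℝ)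
    (A21 : Matrix (Fin m') (Fin k) ℝ) (A22 : Matrix (Fin m') (Fin n') ℝ)
    (L D U : Matrix (Fin k) (Fin k) ℝ) (ρ : ℝ) (hρ : 1 ≤ ρ)
    (hLDU : A11 = L * D * U)
    (hL_lower : ∀ i j : Fin k, i < j → L i j = 0)
    (hL_diag : ∀ i, L i i = 1)
    (hU_upper : ∀ i j : Fin k, j < i → U i j = 0)
    (hU_diag : ∀ i, U i i = 1)
    (hD_diag : ∀ i j : Fin k, i ≠ j → D i j = 0)
    (hD_inv : ∀ i, D i i ≠ 0)
    (hLmax : ∀ i j, |L i j| ≤ 1)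
    (hUmax : ∀ i j, |U i j| ≤ 1)
    (h12 : ∀ i j, |(D⁻¹ * L⁻¹ * A12) i j| ≤ 1)
    (h21 : ∀ i j, |(A21 * U⁻¹ * D⁻¹) i j| ≤ 1)
    (hS : ∀ (i₀ : Fin k) (i : Fin m') (j : Fin n'),
      |(A22 - A21 * A11⁻¹ * A12) i j| ≤ ρ * |D i₀ i₀|) :
    (∀ j : ℕ, 1 ≤ j → j ≤ k →
      sval (Matrix.fromBlocks A11 A12 A21 A22) j ≤
        4 ^ (k + 1) * (k + ρ) * Real.sqrt (m' * n') * sval A11 j) ∧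
    ((4 ^ (k + 1) * ((k : ℝ) + ρ) * Real.sqrt (m' * n')) ^ k)⁻¹ *
        (∏ j ∈ Finset.Icc 1 k, sval (Matrix.fromBlocks A11 A12 A21 A22) j) ≤
      vol A11 := by
  classical
  -- cast facts
  have hm1 : (1:ℝ) ≤ (m':ℝ) := by exact_mod_cast hm
  have hn1 : (1:ℝ) ≤ (n':ℝ) := by exact_mod_cast hn
  have hmn_pos : (0:ℝ) < (m':ℝ) * (n':ℝ) := by nlinarith
  have sqrtmn_pos : (0:ℝ) < Real.sqrt ((m':ℝ) * (n':ℝ)) := Real.sqrt_pos.mpr hmn_pos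
  -- determinants
  have hdetL : L.det = 1 := lower_det_one L hL_lower hL_diag
  have hdetU : U.det = 1 := by
    rw [← Matrix.det_transpose]
    exact lower_det_one Uᵀ (fun a b hab => hU_upper b a hab) hU_diag
  have hDdiag : D = Matrix.diagonal (fun i => D i i) := by
    ext i j
    by_cases h : i = j
    · subst h; simp [Matrix.diagonal]
    · simp [Matrix.diagonal_apply, h, hD_diag i j h]
  have hDdet : IsUnit D.det := by
    rw [hDdiag, Matrix.det_diagonal, isUnit_iff_ne_zero]
    exact Finset.prod_ne_zero_iff.mpr fun i _ => hD_inv i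
  have hdetA11 : IsUnit A11.det := by
    rw [hLDU, Matrix.det_mul, Matrix.det_mul, hdetL, hdetU, one_mul, mul_one]
    exact hDdet
  have hA11inv : A11⁻¹ = U⁻¹ * (D⁻¹ * L⁻¹) := by
    rw [hLDU, Matrix.mul_inv_rev, Matrix.mul_inv_rev]
  have hDinv_eq : D⁻¹ = Matrix.diagonal (fun i => (D i i)⁻¹) := by
    apply Matrix.inv_eq_right_inv
    nth_rewrite 1 [hDdiag]
    rw [Matrix.diagonal_mul_diagonal,
      show (fun i => D i i * (D i i)⁻¹) = fun _ => (1:ℝ) from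
        funext fun i => mul_inv_cancel₀ (hD_inv i), Matrix.diagonal_one]
  -- entrywise bounds on the two mixed blocks
  have hWL : ∀ (i : Fin m') (jj : Fin k), |(A21 * A11⁻¹) i jj| ≤ 2^(k-1) := by
    intro i jj
    have hfac : A21 * A11⁻¹ = (A21 * U⁻¹ * D⁻¹) * L⁻¹ := by
      rw [hA11inv, ← Matrix.mul_assoc, ← Matrix.mul_assoc]
    rw [hfac, Matrix.mul_apply]
    refine (Finset.abs_sum_le_sum_abs _ _).trans ?_
    have hterm : ∀ l, |(A21 * U⁻¹ * D⁻¹) i l * (L⁻¹) l jj| ≤ |(L⁻¹) l jj| := fun l => by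
      rw [abs_mul]
      exact mul_le_of_le_one_left (abs_nonneg _) (h21 i l)
    refine (Finset.sum_le_sum fun l _ => hterm l).trans ?_
    refine (lower_inv_colsum L hL_lower hL_diag hLmax jj).trans ?_
    exact pow_le_pow_right₀ one_le_two (by omega)
  have hUV : ∀ (i : Fin k) (jj : Fin n'), |(A11⁻¹ * A12) i jj| ≤ 2^(k-1) := by
    intro i jj
    have hfac : A11⁻¹ * A12 = U⁻¹ * (D⁻¹ * L⁻¹ * A12) := by
      rw [hA11inv, Matrix.mul_assoc, Matrix.mul_assoc]
    rw [hfac, Matrix.mul_apply]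
    refine (Finset.abs_sum_le_sum_abs _ _).trans ?_
    have hterm : ∀ l, |(U⁻¹) i l * (D⁻¹ * L⁻¹ * A12) l jj| ≤ |(U⁻¹) i l| := fun l => by
      rw [abs_mul]
      exact mul_le_of_le_one_right (abs_nonneg _) (h12 l jj)
    refine (Finset.sum_le_sum fun l _ => hterm l).trans ?_
    refine (upper_inv_rowsum U hU_upper hU_diag hUmax i).trans ?_
    exact pow_le_pow_right₀ one_le_two (by omega)
  set S : Matrix (Fin m') (Fin n') ℝ := A22 - A21 * A11⁻¹ * A12 with hSdef
  -- the key factorization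
  have h22 : A21 * (A11⁻¹ * A12) + S = A22 := by
    rw [hSdef, ← Matrix.mul_assoc]
    abel
  have hid : Matrix.fromBlocks A11 A12 A21 A22
      = Matrix.fromRows (1 : Matrix (Fin k) (Fin k) ℝ) (A21 * A11⁻¹) * A11
          * Matrix.fromCols (1 : Matrix (Fin k) (Fin k) ℝ) (A11⁻¹ * A12)
        + Matrix.fromBlocks 0 0 0 S := by
    rw [Matrix.fromRows_mul, Matrix.one_mul, Matrix.nonsing_inv_mul_cancel_right A11 A21 hdetA11,
      Matrix.fromRows_mul_fromCols, Matrix.mul_one, Matrix.mul_one,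
      Matrix.mul_nonsing_inv_cancel_left A11 A12 hdetA11, Matrix.fromBlocks_add,
      add_zero, add_zero, add_zero, h22]
  -- the main per-index bound
  have main : ∀ j : ℕ, 1 ≤ j → j ≤ k →
      sval (Matrix.fromBlocks A11 A12 A21 A22) j ≤
        4 ^ (k + 1) * (k + ρ) * Real.sqrt (m' * n') * sval A11 j := by
    intro j hj1 hjk
    have hk : 0 < k := lt_of_lt_of_le hj1 hjk
    have hk1 : (1:ℝ) ≤ (k:ℝ) := by exact_mod_cast hk
    have h4k1 : (1:ℝ) ≤ 4^(k-1) := one_le_pow₀ (by norm_num : (1:ℝ) ≤ 4)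
    obtain ⟨i₀, -, hi₀⟩ := Finset.exists_min_image Finset.univ (fun i : Fin k => |D i i|)
      ⟨⟨0, hk⟩, Finset.mem_univ _⟩
    have hDpos : 0 < |D i₀ i₀| := abs_pos.mpr (hD_inv i₀)
    have hDinv_norm : ‖D⁻¹‖ ≤ |D i₀ i₀|⁻¹ := by
      rw [hDinv_eq]
      refine specNorm_diagonal_le _ (by positivity) fun i => ?_
      rw [abs_inv]
      exact inv_anti₀ hDpos (hi₀ i (Finset.mem_univ i))
    have hLinv_norm : ‖L⁻¹‖ ≤ 2^k / Real.sqrt 3 :=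
      specNorm_lower_inv_le L hL_lower hL_diag hLmax
    have hUinv_norm : ‖U⁻¹‖ ≤ 2^k / Real.sqrt 3 :=
      specNorm_upper_inv_le U hU_upper hU_diag hUmax
    have hA11inv_norm : ‖A11⁻¹‖ ≤ (2^k / Real.sqrt 3) * (|D i₀ i₀|⁻¹ * (2^k / Real.sqrt 3)) := by
      rw [hA11inv]
      refine (Matrix.l2_opNorm_mul _ _).trans ?_
      have h2 : ‖D⁻¹ * L⁻¹‖ ≤ |D i₀ i₀|⁻¹ * (2^k / Real.sqrt 3) := by
        refine (Matrix.l2_opNorm_mul _ _).trans ?_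
        exact mul_le_mul hDinv_norm hLinv_norm (norm_nonneg _) (by positivity)
      exact mul_le_mul hUinv_norm h2 (norm_nonneg _) (by positivity)
    have hsv := one_le_norm_inv_mul_sval A11 hdetA11 hj1 hjk
    have hsv0 : 0 ≤ sval A11 j := sval_nonneg A11 hj1
    have hDle : |D i₀ i₀| ≤ 4^k / 3 * sval A11 j := by
      have h1 : |D i₀ i₀| ≤ |D i₀ i₀| * (‖A11⁻¹‖ * sval A11 j) := by
        nth_rewrite 1 [← mul_one (|D i₀ i₀|)]
        exact mul_le_mul_of_nonneg_left hsv (le_of_lt hDpos)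
      have h2 : ‖A11⁻¹‖ * sval A11 j
          ≤ ((2^k / Real.sqrt 3) * (|D i₀ i₀|⁻¹ * (2^k / Real.sqrt 3))) * sval A11 j :=
        mul_le_mul_of_nonneg_right hA11inv_norm hsv0
      have h3 : |D i₀ i₀| * (((2^k / Real.sqrt 3) * (|D i₀ i₀|⁻¹ * (2^k / Real.sqrt 3)))
          * sval A11 j)
          = ((2^k / Real.sqrt 3)^2) * sval A11 j * (|D i₀ i₀| * |D i₀ i₀|⁻¹) := by ring
      have h4 : |D i₀ i₀| * |D i₀ i₀|⁻¹ = 1 := mul_inv_cancel₀ (ne_of_gt hDpos)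
      have h5 : ((2:ℝ)^k / Real.sqrt 3)^2 = 4^k / 3 := by
        rw [div_pow, Real.sq_sqrt (by norm_num : (0:ℝ) ≤ 3), two_pow_sq]
      calc |D i₀ i₀| ≤ |D i₀ i₀| * (‖A11⁻¹‖ * sval A11 j) := h1
        _ ≤ |D i₀ i₀| * (((2^k / Real.sqrt 3) * (|D i₀ i₀|⁻¹ * (2^k / Real.sqrt 3)))
            * sval A11 j) := mul_le_mul_of_nonneg_left h2 (le_of_lt hDpos)
        _ = 4^k / 3 * sval A11 j := by rw [h3, h4, mul_one, h5]
    -- spectral norm bounds for the three block matrices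
    have hP : ‖Matrix.fromRows (1 : Matrix (Fin k) (Fin k) ℝ) (A21 * A11⁻¹)‖
        ≤ 2^(k-1) * Real.sqrt (2 * m' * k) := by
      refine specNorm_le_of_sq_sum_le _ (by positivity) ?_
      have hc : ((2:ℝ)^(k-1) * Real.sqrt (2 * m' * k))^2 = 4^(k-1) * (2 * m' * k) := by
        rw [mul_pow, two_pow_sq, Real.sq_sqrt (by positivity)]
      rw [hc, Fintype.sum_sum_type]
      have hone : ∀ i : Fin k, ∑ jj : Fin k, ((1 : Matrix (Fin k) (Fin k) ℝ) i jj)^2 = 1 := by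
        intro i
        have he : ∀ jj : Fin k, ((1 : Matrix (Fin k) (Fin k) ℝ) i jj)^2
            = if jj = i then (1:ℝ) else 0 := by
          intro jj
          rw [Matrix.one_apply]
          by_cases h : i = jj
          · subst h; simp
          · rw [if_neg h, if_neg (Ne.symm h)]; norm_num
        rw [Finset.sum_congr rfl fun jj _ => he jj, Finset.sum_ite_eq' Finset.univ i]
        simp
      have hsum1 : ∑ i : Fin k, ∑ jj,
          ((Matrix.fromRows (1 : Matrix (Fin k) (Fin k) ℝ) (A21 * A11⁻¹)) (Sum.inl i) jj)^2
          = (k:ℝ) := by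
        simp only [Matrix.fromRows_apply_inl]
        rw [Finset.sum_congr rfl fun i _ => hone i]
        simp
      have hsum2 : ∑ i : Fin m', ∑ jj,
          ((Matrix.fromRows (1 : Matrix (Fin k) (Fin k) ℝ) (A21 * A11⁻¹)) (Sum.inr i) jj)^2
          ≤ (m':ℝ) * ((k:ℝ) * 4^(k-1)) := by
        simp only [Matrix.fromRows_apply_inr]
        calc ∑ i : Fin m', ∑ jj : Fin k, ((A21 * A11⁻¹) i jj)^2
            ≤ ∑ _i : Fin m', ∑ _jj : Fin k, ((2:ℝ)^(k-1))^2 := by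
              refine Finset.sum_le_sum fun i _ => Finset.sum_le_sum fun jj _ => ?_
              rw [← sq_abs]
              exact pow_le_pow_left₀ (abs_nonneg _) (hWL i jj) 2
          _ = (m':ℝ) * ((k:ℝ) * 4^(k-1)) := by
              rw [Finset.sum_const, Finset.sum_const]
              simp [two_pow_sq, mul_assoc]
      rw [hsum1]
      have hfin : (k:ℝ) + (m':ℝ) * ((k:ℝ) * 4^(k-1)) ≤ 4^(k-1) * (2 * m' * k) := by
        have hx : (1:ℝ) ≤ (m':ℝ) * 4^(k-1) := by
          nlinarith
        have hy : (k:ℝ) ≤ (k:ℝ) * ((m':ℝ) * 4^(k-1)) :=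
          le_mul_of_one_le_right (by linarith) hx
        nlinarith
      linarith [hsum2]
    have hQ : ‖Matrix.fromCols (1 : Matrix (Fin k) (Fin k) ℝ) (A11⁻¹ * A12)‖
        ≤ 2^(k-1) * Real.sqrt (2 * n' * k) := by
      refine specNorm_le_of_sq_sum_le _ (by positivity) ?_
      have hc : ((2:ℝ)^(k-1) * Real.sqrt (2 * n' * k))^2 = 4^(k-1) * (2 * n' * k) := by
        rw [mul_pow, two_pow_sq, Real.sq_sqrt (by positivity)]
      rw [hc]
      have hrow : ∀ i : Fin k, ∑ jj : Fin k ⊕ Fin n',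
          ((Matrix.fromCols (1 : Matrix (Fin k) (Fin k) ℝ) (A11⁻¹ * A12)) i jj)^2
          = (∑ jj : Fin k, ((1 : Matrix (Fin k) (Fin k) ℝ) i jj)^2)
            + ∑ jj : Fin n', ((A11⁻¹ * A12) i jj)^2 := by
        intro i
        rw [Fintype.sum_sum_type]
        simp only [Matrix.fromCols_apply_inl, Matrix.fromCols_apply_inr]
      rw [Finset.sum_congr rfl fun i _ => hrow i, Finset.sum_add_distrib]
      have hone : ∀ i : Fin k, ∑ jj : Fin k, ((1 : Matrix (Fin k) (Fin k) ℝ) i jj)^2 = 1 := by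
        intro i
        have he : ∀ jj : Fin k, ((1 : Matrix (Fin k) (Fin k) ℝ) i jj)^2
            = if jj = i then (1:ℝ) else 0 := by
          intro jj
          rw [Matrix.one_apply]
          by_cases h : i = jj
          · subst h; simp
          · rw [if_neg h, if_neg (Ne.symm h)]; norm_num
        rw [Finset.sum_congr rfl fun jj _ => he jj, Finset.sum_ite_eq' Finset.univ i]
        simp
      have hsum1 : ∑ i : Fin k, ∑ jj : Fin k, ((1 : Matrix (Fin k) (Fin k) ℝ) i jj)^2 = (k:ℝ) := by
        rw [Finset.sum_congr rfl fun i _ => hone i]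
        simp
      have hsum2 : ∑ i : Fin k, ∑ jj : Fin n', ((A11⁻¹ * A12) i jj)^2
          ≤ (k:ℝ) * ((n':ℝ) * 4^(k-1)) := by
        calc ∑ i : Fin k, ∑ jj : Fin n', ((A11⁻¹ * A12) i jj)^2
            ≤ ∑ _i : Fin k, ∑ _jj : Fin n', ((2:ℝ)^(k-1))^2 := by
              refine Finset.sum_le_sum fun i _ => Finset.sum_le_sum fun jj _ => ?_
              rw [← sq_abs]
              exact pow_le_pow_left₀ (abs_nonneg _) (hUV i jj) 2
          _ = (k:ℝ) * ((n':ℝ) * 4^(k-1)) := by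
              rw [Finset.sum_const, Finset.sum_const]
              simp [two_pow_sq, mul_assoc]
      rw [hsum1]
      have hfin : (k:ℝ) + (k:ℝ) * ((n':ℝ) * 4^(k-1)) ≤ 4^(k-1) * (2 * n' * k) := by
        have hx : (1:ℝ) ≤ (n':ℝ) * 4^(k-1) := by
          nlinarith
        have hy : (k:ℝ) ≤ (k:ℝ) * ((n':ℝ) * 4^(k-1)) :=
          le_mul_of_one_le_right (by linarith) hx
        nlinarith
      linarith [hsum2]
    have hStil : ‖Matrix.fromBlocks (0 : Matrix (Fin k) (Fin k) ℝ)
        (0 : Matrix (Fin k) (Fin n') ℝ) (0 : Matrix (Fin m') (Fin k) ℝ) S‖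
        ≤ Real.sqrt (m' * n') * (ρ * |D i₀ i₀|) := by
      refine specNorm_le_of_sq_sum_le _ (by positivity) ?_
      have hc : (Real.sqrt ((m':ℝ) * n') * (ρ * |D i₀ i₀|))^2
          = ((m':ℝ) * n') * (ρ * |D i₀ i₀|)^2 := by
        rw [mul_pow, Real.sq_sqrt (by positivity)]
      rw [hc, Fintype.sum_sum_type]
      have hz1 : ∑ i : Fin k, ∑ jj : Fin k ⊕ Fin n',
          ((Matrix.fromBlocks (0 : Matrix (Fin k) (Fin k) ℝ)
            (0 : Matrix (Fin k) (Fin n') ℝ) (0 : Matrix (Fin m') (Fin k) ℝ) S)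
            (Sum.inl i) jj)^2 = 0 := by
        refine Finset.sum_eq_zero fun i _ => Finset.sum_eq_zero fun jj _ => ?_
        rcases jj with jj | jj <;> simp
      rw [hz1, zero_add]
      have hz2 : ∀ i : Fin m', ∑ jj : Fin k ⊕ Fin n',
          ((Matrix.fromBlocks (0 : Matrix (Fin k) (Fin k) ℝ)
            (0 : Matrix (Fin k) (Fin n') ℝ) (0 : Matrix (Fin m') (Fin k) ℝ) S)
            (Sum.inr i) jj)^2 = ∑ jj : Fin n', (S i jj)^2 := by
        intro i
        rw [Fintype.sum_sum_type]
        simp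
      rw [Finset.sum_congr rfl fun i _ => hz2 i]
      calc ∑ i : Fin m', ∑ jj : Fin n', (S i jj)^2
          ≤ ∑ _i : Fin m', ∑ _jj : Fin n', (ρ * |D i₀ i₀|)^2 := by
            refine Finset.sum_le_sum fun i _ => Finset.sum_le_sum fun jj _ => ?_
            rw [← sq_abs]
            exact pow_le_pow_left₀ (abs_nonneg _) (hS i₀ i jj) 2
        _ = ((m':ℝ) * n') * (ρ * |D i₀ i₀|)^2 := by
            rw [Finset.sum_const, Finset.sum_const]
            simp [mul_assoc]
    -- assembling
    have hsqrt : Real.sqrt (2 * m' * k) * Real.sqrt (2 * n' * k)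
        = 2 * (k:ℝ) * Real.sqrt ((m':ℝ) * n') := by
      rw [← Real.sqrt_mul (by positivity)]
      rw [show (2 * (m':ℝ) * k) * (2 * (n':ℝ) * k) = (2*(k:ℝ))^2 * ((m':ℝ)*n') by ring]
      rw [Real.sqrt_mul (by positivity), Real.sqrt_sq (by positivity)]
    have hcPcQ : (2^(k-1) * Real.sqrt (2 * m' * k)) * (2^(k-1) * Real.sqrt (2 * n' * k))
        = 4^(k-1) * (2 * (k:ℝ) * Real.sqrt ((m':ℝ) * n')) := by
      rw [show (2^(k-1) * Real.sqrt (2 * m' * k)) * (2^(k-1) * Real.sqrt (2 * n' * k))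
          = ((2:ℝ)^(k-1))^2 * (Real.sqrt (2 * m' * k) * Real.sqrt (2 * n' * k)) by ring,
        two_pow_sq, hsqrt]
    have hPQs : sval (Matrix.fromRows (1 : Matrix (Fin k) (Fin k) ℝ) (A21 * A11⁻¹) * A11
        * Matrix.fromCols (1 : Matrix (Fin k) (Fin k) ℝ) (A11⁻¹ * A12)) j
        ≤ (4^(k-1) * (2 * (k:ℝ) * Real.sqrt ((m':ℝ) * n'))) * sval A11 j := by
      refine (sval_mul_le _ _ _ hj1).trans ?_
      rw [← hcPcQ]
      refine mul_le_mul_of_nonneg_right ?_ hsv0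
      exact mul_le_mul hP hQ (norm_nonneg _) (by positivity)
    have hcoeff : 2 * (k:ℝ) * 4^(k-1) + ρ * (4^k/3) ≤ 4^(k+1) * ((k:ℝ) + ρ) := by
      have e1 : (4:ℝ)^k = 4^(k-1) * 4 := by
        rw [← pow_succ]
        congr 1
        omega
      have e2 : (4:ℝ)^(k+1) = 4^(k-1) * 16 := by
        rw [show k + 1 = (k-1) + 2 by omega, pow_add]
        norm_num
      rw [e1, e2]
      nlinarith
    calc sval (Matrix.fromBlocks A11 A12 A21 A22) j
        = sval (Matrix.fromRows (1 : Matrix (Fin k) (Fin k) ℝ) (A21 * A11⁻¹) * A11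
            * Matrix.fromCols (1 : Matrix (Fin k) (Fin k) ℝ) (A11⁻¹ * A12)
            + Matrix.fromBlocks 0 0 0 S) j := by rw [← hid]
      _ ≤ sval (Matrix.fromRows (1 : Matrix (Fin k) (Fin k) ℝ) (A21 * A11⁻¹) * A11
            * Matrix.fromCols (1 : Matrix (Fin k) (Fin k) ℝ) (A11⁻¹ * A12)) j
          + ‖Matrix.fromBlocks (0 : Matrix (Fin k) (Fin k) ℝ)
            (0 : Matrix (Fin k) (Fin n') ℝ) (0 : Matrix (Fin m') (Fin k) ℝ) S‖ :=
          sval_add_le _ _ hj1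
      _ ≤ (4^(k-1) * (2 * (k:ℝ) * Real.sqrt ((m':ℝ) * n'))) * sval A11 j
          + Real.sqrt ((m':ℝ) * n') * (ρ * (4^k / 3 * sval A11 j)) := by
          refine add_le_add hPQs (hStil.trans ?_)
          refine mul_le_mul_of_nonneg_left ?_ (Real.sqrt_nonneg _)
          exact mul_le_mul_of_nonneg_left hDle (by linarith)
      _ = (2 * (k:ℝ) * 4^(k-1) + ρ * (4^k/3)) * (Real.sqrt ((m':ℝ) * n') * sval A11 j) := by
          ring
      _ ≤ (4^(k+1) * ((k:ℝ) + ρ)) * (Real.sqrt ((m':ℝ) * n') * sval A11 j) := by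
          refine mul_le_mul_of_nonneg_right hcoeff ?_
          exact mul_nonneg (Real.sqrt_nonneg _) hsv0
      _ = 4 ^ (k + 1) * ((k:ℝ) + ρ) * Real.sqrt ((m':ℝ) * n') * sval A11 j := by ring
  refine ⟨main, ?_⟩
  -- part 2
  have hCpos : 0 < 4 ^ (k + 1) * ((k : ℝ) + ρ) * Real.sqrt (m' * n') := by
    have h1 : (0:ℝ) < 4^(k+1) := by positivity
    have h2 : (0:ℝ) < (k:ℝ) + ρ := by
      have : (0:ℝ) ≤ (k:ℝ) := Nat.cast_nonneg k
      linarith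
    exact mul_pos (mul_pos h1 h2) sqrtmn_pos
  have hvol : vol A11 = ∏ j ∈ Finset.Icc 1 k, sval A11 j := by
    simp [vol, Fintype.card_fin, min_self]
  have hprod : ∏ j ∈ Finset.Icc 1 k, sval (Matrix.fromBlocks A11 A12 A21 A22) j
      ≤ (4 ^ (k + 1) * ((k : ℝ) + ρ) * Real.sqrt (m' * n'))^k
        * ∏ j ∈ Finset.Icc 1 k, sval A11 j := by
    have h1 : ∏ j ∈ Finset.Icc 1 k, sval (Matrix.fromBlocks A11 A12 A21 A22) j
        ≤ ∏ j ∈ Finset.Icc 1 k,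
          (4 ^ (k + 1) * ((k : ℝ) + ρ) * Real.sqrt (m' * n') * sval A11 j) := by
      refine Finset.prod_le_prod (fun j hj => ?_) (fun j hj => ?_)
      · exact sval_nonneg _ (Finset.mem_Icc.mp hj).1
      · exact main j (Finset.mem_Icc.mp hj).1 (Finset.mem_Icc.mp hj).2
    refine h1.trans (le_of_eq ?_)
    rw [Finset.prod_mul_distrib, Finset.prod_const, Nat.card_Icc]
    simp
  calc (( 4 ^ (k + 1) * ((k : ℝ) + ρ) * Real.sqrt (m' * n'))^k)⁻¹
      * ∏ j ∈ Finset.Icc 1 k, sval (Matrix.fromBlocks A11 A12 A21 A22) j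
      ≤ ((4 ^ (k + 1) * ((k : ℝ) + ρ) * Real.sqrt (m' * n'))^k)⁻¹
        * ((4 ^ (k + 1) * ((k : ℝ) + ρ) * Real.sqrt (m' * n'))^k
          * ∏ j ∈ Finset.Icc 1 k, sval A11 j) := by
        refine mul_le_mul_of_nonneg_left hprod ?_
        exact inv_nonneg.mpr (pow_nonneg hCpos.le k)
    _ = ∏ j ∈ Finset.Icc 1 k, sval A11 j := by
        rw [← mul_assoc, inv_mul_cancel₀ (pow_ne_zero k (ne_of_gt hCpos)), one_mul]
    _ = vol A11 := hvol.symm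
end
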